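/- Let 𝒩 be a tree-based network on X = {1,...,n} and let π be any permutation of X. Then there is a finite sequence of crossovers between terminal arcs of adjacent leaves (i.e., crossovers σ_{i,i+1} for various i) whose successive addition to 𝒩 yields a tree-based network 𝒩' on X with the property that, for every base tree 𝒯 of 𝒩, the tree obtained from 𝒯 by relabelling each leaf x as π(x) is a base tree of 𝒩'. -/

import Mathlib

/-- A finite directed graph with vertices drawn from ℕ. -/
structure Dgraph where
  verts : Finset ℕ
  arcs : Finset (ℕ × ℕ)

namespace Dgraph

/-- In-degree of a vertex. -/
def indeg (G : Dgraph) (v : ℕ) : ℕ := (G.arcs.filter fun a => a.2 = v).card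

/-- Out-degree of a vertex. -/
def outdeg (G : Dgraph) (v : ℕ) : ℕ := (G.arcs.filter fun a => a.1 = v).card

/-- The adjacency (arc) relation. -/
def ArcRel (G : Dgraph) : ℕ → ℕ → Prop := fun u v => (u, v) ∈ G.arcs

/-- A directed graph is acyclic if it has no directed cycle. -/
def Acyclic (G : Dgraph) : Prop :=
  ∀ u v : ℕ, G.ArcRel u v → ¬ Relation.ReflTransGen G.ArcRel v u

/-- All arcs join vertices of the graph. -/
def WellFormed (G : Dgraph) : Prop :=
  ∀ a ∈ G.arcs, a.1 ∈ G.verts ∧ a.2 ∈ G.verts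

/-- The leaf-label set X = {1, …, n}. -/
def leafSet (n : ℕ) : Finset ℕ := Finset.Icc 1 n

/-- A leaf: in-degree 1 and out-degree 0. -/
def IsLeaf (G : Dgraph) (v : ℕ) : Prop := v ∈ G.verts ∧ G.indeg v = 1 ∧ G.outdeg v = 0

/-- A root: a vertex of in-degree 0. -/
def IsRoot (G : Dgraph) (v : ℕ) : Prop := v ∈ G.verts ∧ G.indeg v = 0

/-- A rooted binary phylogenetic network on X = {1, …, n}: an acyclic digraph whose
leaves (in-degree 1, out-degree 0) are exactly X, with a unique root ρ of in-degree 0 and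
out-degree in {1,2}, all other vertices having degrees {indeg, outdeg} = {1, 2}. -/
def RBPN (n : ℕ) (G : Dgraph) : Prop :=
  G.WellFormed ∧ G.Acyclic ∧
  (∀ v : ℕ, G.IsLeaf v ↔ v ∈ leafSet n) ∧
  ∃ ρ ∈ G.verts, G.indeg ρ = 0 ∧ (G.outdeg ρ = 1 ∨ G.outdeg ρ = 2) ∧
    ∀ v ∈ G.verts, v ∉ leafSet n → v ≠ ρ →
      ((G.indeg v = 1 ∧ G.outdeg v = 2) ∨ (G.indeg v = 2 ∧ G.outdeg v = 1))

/-- A rooted binary phylogenetic tree on X = {1, …, n}: a rooted binary phylogenetic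
network with no vertex of in-degree 2. -/
def RBPT (n : ℕ) (G : Dgraph) : Prop :=
  RBPN n G ∧ ∀ v : ℕ, G.indeg v ≠ 2

/-- Inserting one new vertex into one arc. -/
def SubdivStep (G G' : Dgraph) : Prop :=
  ∃ u v w : ℕ, (u, v) ∈ G.arcs ∧ w ∉ G.verts ∧
    G' = ⟨insert w G.verts, insert (u, w) (insert (w, v) (G.arcs.erase (u, v)))⟩

/-- `G'` is a subdivision of `G`: obtained by inserting vertices into arcs zero or more times. -/
def Subdivision (G G' : Dgraph) : Prop := Relation.ReflTransGen SubdivStep G G'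

/-- Smoothing a single vertex of in-degree 1 and out-degree 1. -/
def SmoothStep (G G' : Dgraph) : Prop :=
  ∃ u v w : ℕ, G.indeg v = 1 ∧ G.outdeg v = 1 ∧ (u, v) ∈ G.arcs ∧ (v, w) ∈ G.arcs ∧
    G' = ⟨G.verts.erase v, insert (u, w) ((G.arcs.erase (u, v)).erase (v, w))⟩

/-- `G'` is the result of smoothing all vertices of in-degree 1 and out-degree 1 of `G`. -/
def Smoothed (G G' : Dgraph) : Prop :=
  Relation.ReflTransGen SmoothStep G G' ∧ ∀ v : ℕ, ¬ (G'.indeg v = 1 ∧ G'.outdeg v = 1)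

/-- `f` realises a digraph isomorphism from `G` onto `H`. -/
def IsIsoOn (f : ℕ → ℕ) (G H : Dgraph) : Prop :=
  Set.BijOn f ↑G.verts ↑H.verts ∧
  ∀ u ∈ G.verts, ∀ v ∈ G.verts, ((u, v) ∈ G.arcs ↔ (f u, f v) ∈ H.arcs)

/-- Isomorphism of (unlabelled) digraphs. -/
def Isomorphic (G H : Dgraph) : Prop := ∃ f : ℕ → ℕ, IsIsoOn f G H

/-- Isomorphism of digraphs fixing each leaf label in X = {1, …, n}. -/
def IsomorphicL (n : ℕ) (G H : Dgraph) : Prop :=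
  ∃ f : ℕ → ℕ, IsIsoOn f G H ∧ ∀ x ∈ leafSet n, f x = x

/-- Two digraphs are homeomorphic if they become isomorphic after smoothing all
vertices of in-degree 1 and out-degree 1. -/
def Homeomorphic (G H : Dgraph) : Prop :=
  ∃ G' H' : Dgraph, Smoothed G G' ∧ Smoothed H H' ∧ Isomorphic G' H'

/-- Label-preserving homeomorphism (the isomorphism after smoothing fixes the leaf labels). -/
def HomeomorphicL (n : ℕ) (G H : Dgraph) : Prop :=
  ∃ G' H' : Dgraph, Smoothed G G' ∧ Smoothed H H' ∧ IsomorphicL n G' H'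

/-- A set of mutually vertex-disjoint arcs. -/
def DisjointArcs (I : Finset (ℕ × ℕ)) : Prop :=
  ∀ a ∈ I, ∀ b ∈ I, a ≠ b → a.1 ≠ b.1 ∧ a.1 ≠ b.2 ∧ a.2 ≠ b.1 ∧ a.2 ≠ b.2

/-- `T` is a base tree of the network `N` on X = {1, …, n}: there are a subdivision
`T' = (V', A')` of `T` and a set `I` of mutually vertex-disjoint linking arcs between
attachment points (vertices of `V' \ V`) such that `(V', A' ∪ I)` is acyclic and
homeomorphic (preserving leaf labels) to `N`. -/
def IsBaseTree (n : ℕ) (N T : Dgraph) : Prop :=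
  ∃ T' : Dgraph, Subdivision T T' ∧
    ∃ I : Finset (ℕ × ℕ),
      (∀ a ∈ I, a.1 ∈ T'.verts ∧ a.1 ∉ T.verts ∧ a.2 ∈ T'.verts ∧ a.2 ∉ T.verts) ∧
      DisjointArcs I ∧
      Acyclic ⟨T'.verts, T'.arcs ∪ I⟩ ∧
      HomeomorphicL n ⟨T'.verts, T'.arcs ∪ I⟩ N

/-- A tree-based network on X = {1, …, n}: a rooted binary phylogenetic network having
some rooted binary phylogenetic tree on X as a base tree. -/
def TreeBased (n : ℕ) (N : Dgraph) : Prop :=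
  RBPN n N ∧ ∃ T : Dgraph, RBPT n T ∧ IsBaseTree n N T

/-- A tree-based network `N = (V, A)` on X is universal if for every rooted binary
phylogenetic tree `T` on X there is a set `I ⊆ A` of linking arcs such that
`(V, A \ I)` is homeomorphic (preserving leaf labels) to `T`. -/
def Universal (n : ℕ) (N : Dgraph) : Prop :=
  ∀ T : Dgraph, RBPT n T →
    ∃ I : Finset (ℕ × ℕ), I ⊆ N.arcs ∧ HomeomorphicL n ⟨N.verts, N.arcs \ I⟩ T

/-- A tree-based network shape (given by a representative `N = (V, A)`) is universal if
for every rooted binary phylogenetic tree shape (given by a representative `T`) there is a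
set `I` of linking arcs such that `(V, A \ I)` is homeomorphic to `T` as unlabelled digraphs. -/
def ShapeUniversal (n : ℕ) (N : Dgraph) : Prop :=
  ∀ T : Dgraph, RBPT n T →
    ∃ I : Finset (ℕ × ℕ), I ⊆ N.arcs ∧ Homeomorphic ⟨N.verts, N.arcs \ I⟩ T

/-- Relabelling the vertices of a digraph by a function. -/
def relabel (f : ℕ → ℕ) (G : Dgraph) : Dgraph :=
  ⟨G.verts.image f, G.arcs.image fun a => (f a.1, f a.2)⟩

/-- `N'` is obtained from `N` by adding the crossover σ_{ij}: the terminal arcs `(u, i)`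
and `(v, j)` are each subdivided twice, creating `a₁, a₂` (towards `i`) and `b₁, b₂`
(towards `j`), and the crossed arcs `(a₁, b₂)` and `(b₁, a₂)` are added. -/
def CrossoverAt (N : Dgraph) (i j : ℕ) (N' : Dgraph) : Prop :=
  ∃ u v a1 a2 b1 b2 : ℕ,
    (u, i) ∈ N.arcs ∧ (v, j) ∈ N.arcs ∧
    a1 ∉ N.verts ∧ a2 ∉ N.verts ∧ b1 ∉ N.verts ∧ b2 ∉ N.verts ∧
    [a1, a2, b1, b2].Nodup ∧
    N' = ⟨N.verts ∪ {a1, a2, b1, b2},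
          (N.arcs \ {(u, i), (v, j)}) ∪
            {(u, a1), (a1, a2), (a2, i), (v, b1), (b1, b2), (b2, j), (a1, b2), (b1, a2)}⟩

end Dgraph

open Dgraph
/-- One crossover addition between the terminal arcs of two adjacent leaves i and i+1. -/
def AdjCrossStep (n : ℕ) (M M' : Dgraph) : Prop :=
  ∃ i : ℕ, i ∈ leafSet n ∧ i + 1 ∈ leafSet n ∧ CrossoverAt M i (i + 1) M'

/- ===================== Auxiliary development ===================== -/

open Dgraph

namespace AuxCross

/-- The unique in-arc of a vertex of in-degree one. -/
lemma indeg_one_filter {G : Dgraph} {w p : ℕ} (h : G.indeg w = 1) (hp : (p, w) ∈ G.arcs) :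
    G.arcs.filter (fun a => a.2 = w) = {(p, w)} := by
  unfold Dgraph.indeg at h
  rw [Finset.card_eq_one] at h
  obtain ⟨a, ha⟩ := h
  have hpmem : (p, w) ∈ G.arcs.filter (fun a => a.2 = w) := by
    simp [Finset.mem_filter, hp]
  rw [ha] at hpmem ⊢
  simp at hpmem
  rw [hpmem]

lemma indeg_one_exists {G : Dgraph} {w : ℕ} (h : G.indeg w = 1) :
    ∃ p, (p, w) ∈ G.arcs := by
  unfold Dgraph.indeg at h
  rw [Finset.card_eq_one] at h
  obtain ⟨a, ha⟩ := h
  have : a ∈ G.arcs.filter (fun b => b.2 = w) := ha ▸ Finset.mem_singleton_self a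
  simp [Finset.mem_filter] at this
  exact ⟨a.1, by rw [← this.2]; exact this.1⟩

lemma indeg_one_eq {G : Dgraph} {w p x : ℕ} (h : G.indeg w = 1) (hp : (p, w) ∈ G.arcs)
    (hx : (x, w) ∈ G.arcs) : x = p := by
  have := indeg_one_filter h hp
  have hxm : (x, w) ∈ G.arcs.filter (fun a => a.2 = w) := by simp [Finset.mem_filter, hx]
  rw [this, Finset.mem_singleton, Prod.ext_iff] at hxm
  exact hxm.1

lemma outdeg_zero_not_mem {G : Dgraph} {w y : ℕ} (h : G.outdeg w = 0) :
    (w, y) ∉ G.arcs := by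
  intro hmem
  have : (w, y) ∈ G.arcs.filter (fun a => a.1 = w) := by simp [Finset.mem_filter, hmem]
  unfold Dgraph.outdeg at h
  rw [Finset.card_eq_zero] at h
  simp [h] at this

lemma indeg_zero_not_mem {G : Dgraph} {w y : ℕ} (h : G.indeg w = 0) :
    (y, w) ∉ G.arcs := by
  intro hmem
  have : (y, w) ∈ G.arcs.filter (fun a => a.2 = w) := by simp [Finset.mem_filter, hmem]
  unfold Dgraph.indeg at h
  rw [Finset.card_eq_zero] at h
  simp [h] at this

/-- The context for a crossover gadget at leaves `i`, `j` with fresh vertices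
`a1 a2 b1 b2` and parents `p`, `q`. -/
structure Ctx (i j a1 a2 b1 b2 p q : ℕ) (G : Dgraph) : Prop where
  wf : G.WellFormed
  hij : i ≠ j
  fa1 : a1 ∉ G.verts
  fa2 : a2 ∉ G.verts
  fb1 : b1 ∉ G.verts
  fb2 : b2 ∉ G.verts
  d12 : a1 ≠ a2
  d13 : a1 ≠ b1
  d14 : a1 ≠ b2
  d23 : a2 ≠ b1
  d24 : a2 ≠ b2
  d34 : b1 ≠ b2
  hpi : (p, i) ∈ G.arcs
  hqj : (q, j) ∈ G.arcs
  indi : G.indeg i = 1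
  indj : G.indeg j = 1
  outi : G.outdeg i = 0
  outj : G.outdeg j = 0

variable {i j a1 a2 b1 b2 p q : ℕ} {G : Dgraph}

namespace Ctx

variable (C : Ctx i j a1 a2 b1 b2 p q G)
include C

lemma hiv : i ∈ G.verts := (C.wf _ C.hpi).2
lemma hjv : j ∈ G.verts := (C.wf _ C.hqj).2
lemma hpv : p ∈ G.verts := (C.wf _ C.hpi).1
lemma hqv : q ∈ G.verts := (C.wf _ C.hqj).1
lemma pi' : p ≠ i := fun h => outdeg_zero_not_mem C.outi (h ▸ C.hpi)
lemma pj : p ≠ j := by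
  intro h
  have hx := C.hpi
  rw [h] at hx
  exact outdeg_zero_not_mem C.outj hx
lemma qi : q ≠ i := by
  intro h
  have hx := C.hqj
  rw [h] at hx
  exact outdeg_zero_not_mem C.outi hx
lemma qj' : q ≠ j := fun h => outdeg_zero_not_mem C.outj (h ▸ C.hqj)
lemma ia1 : i ≠ a1 := fun h => C.fa1 (h ▸ C.hiv)
lemma ia2 : i ≠ a2 := fun h => C.fa2 (h ▸ C.hiv)
lemma ib1 : i ≠ b1 := fun h => C.fb1 (h ▸ C.hiv)
lemma ib2 : i ≠ b2 := fun h => C.fb2 (h ▸ C.hiv)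
lemma ja1 : j ≠ a1 := fun h => C.fa1 (h ▸ C.hjv)
lemma ja2 : j ≠ a2 := fun h => C.fa2 (h ▸ C.hjv)
lemma jb1 : j ≠ b1 := fun h => C.fb1 (h ▸ C.hjv)
lemma jb2 : j ≠ b2 := fun h => C.fb2 (h ▸ C.hjv)
lemma pa1 : p ≠ a1 := fun h => C.fa1 (h ▸ C.hpv)
lemma pa2 : p ≠ a2 := fun h => C.fa2 (h ▸ C.hpv)
lemma pb1 : p ≠ b1 := fun h => C.fb1 (h ▸ C.hpv)
lemma pb2 : p ≠ b2 := fun h => C.fb2 (h ▸ C.hpv)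
lemma qa1 : q ≠ a1 := fun h => C.fa1 (h ▸ C.hqv)
lemma qa2 : q ≠ a2 := fun h => C.fa2 (h ▸ C.hqv)
lemma qb1 : q ≠ b1 := fun h => C.fb1 (h ▸ C.hqv)
lemma qb2 : q ≠ b2 := fun h => C.fb2 (h ▸ C.hqv)

/-- No arc of `G` touches a fresh vertex. -/
lemma no_arc_a1_fst {y : ℕ} : (a1, y) ∉ G.arcs := fun h => C.fa1 (C.wf _ h).1
lemma no_arc_a2_fst {y : ℕ} : (a2, y) ∉ G.arcs := fun h => C.fa2 (C.wf _ h).1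
lemma no_arc_b1_fst {y : ℕ} : (b1, y) ∉ G.arcs := fun h => C.fb1 (C.wf _ h).1
lemma no_arc_b2_fst {y : ℕ} : (b2, y) ∉ G.arcs := fun h => C.fb2 (C.wf _ h).1
lemma no_arc_a1_snd {y : ℕ} : (y, a1) ∉ G.arcs := fun h => C.fa1 (C.wf _ h).2
lemma no_arc_a2_snd {y : ℕ} : (y, a2) ∉ G.arcs := fun h => C.fa2 (C.wf _ h).2
lemma no_arc_b1_snd {y : ℕ} : (y, b1) ∉ G.arcs := fun h => C.fb1 (C.wf _ h).2
lemma no_arc_b2_snd {y : ℕ} : (y, b2) ∉ G.arcs := fun h => C.fb2 (C.wf _ h).2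

end Ctx

/-- The crossover graph. -/
def X (i j a1 a2 b1 b2 p q : ℕ) (G : Dgraph) : Dgraph :=
  ⟨G.verts ∪ {a1, a2, b1, b2},
   (G.arcs \ {(p, i), (q, j)}) ∪
     {(p, a1), (a1, a2), (a2, i), (q, b1), (b1, b2), (b2, j), (a1, b2), (b1, a2)}⟩

lemma mem_X_arcs {x y : ℕ} :
    (x, y) ∈ (X i j a1 a2 b1 b2 p q G).arcs ↔
      ((x, y) ∈ G.arcs ∧ ¬(x = p ∧ y = i) ∧ ¬(x = q ∧ y = j)) ∨
      (x = p ∧ y = a1) ∨ (x = a1 ∧ y = a2) ∨ (x = a2 ∧ y = i) ∨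
      (x = q ∧ y = b1) ∨ (x = b1 ∧ y = b2) ∨ (x = b2 ∧ y = j) ∨
      (x = a1 ∧ y = b2) ∨ (x = b1 ∧ y = a2) := by
  simp only [X, Finset.mem_union, Finset.mem_sdiff, Finset.mem_insert,
    Finset.mem_singleton, Prod.mk.injEq, not_or]

lemma mem_X_verts {x : ℕ} :
    x ∈ (X i j a1 a2 b1 b2 p q G).verts ↔
      x ∈ G.verts ∨ x = a1 ∨ x = a2 ∨ x = b1 ∨ x = b2 := by
  simp only [X, Finset.mem_union, Finset.mem_insert, Finset.mem_singleton]

lemma X_wf (C : Ctx i j a1 a2 b1 b2 p q G) : (X i j a1 a2 b1 b2 p q G).WellFormed := by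
  rintro ⟨x, y⟩ hxy
  rw [mem_X_arcs] at hxy
  simp only [mem_X_verts]
  rcases hxy with ⟨h, -, -⟩ | h
  · exact ⟨Or.inl (C.wf _ h).1, Or.inl (C.wf _ h).2⟩
  · have hpv := C.hpv; have hqv := C.hqv; have hiv := C.hiv; have hjv := C.hjv
    rcases h with ⟨rfl, rfl⟩ | ⟨rfl, rfl⟩ | ⟨rfl, rfl⟩ | ⟨rfl, rfl⟩ | ⟨rfl, rfl⟩ |
      ⟨rfl, rfl⟩ | ⟨rfl, rfl⟩ | ⟨rfl, rfl⟩ <;> simp_all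

end AuxCross

namespace AuxCross

variable {i j a1 a2 b1 b2 p q : ℕ} {G : Dgraph}

section Reach

variable (C : Ctx i j a1 a2 b1 b2 p q G)
include C

lemma X_no_out_i {y : ℕ} : ¬ (X i j a1 a2 b1 b2 p q G).ArcRel i y := by
  intro h
  simp only [Dgraph.ArcRel] at*; rw [mem_X_arcs] at h
  have h1 := C.pi'.symm; have h2 := C.ia1; have h3 := C.ia2
  have h4 := C.qi.symm; have h5 := C.ib1; have h6 := C.ib2
  rcases h with ⟨hm, -, -⟩ | h
  · exact outdeg_zero_not_mem C.outi hm
  · tauto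

lemma X_no_out_j {y : ℕ} : ¬ (X i j a1 a2 b1 b2 p q G).ArcRel j y := by
  intro h
  simp only [Dgraph.ArcRel] at*; rw [mem_X_arcs] at h
  have h1 := C.pj.symm; have h2 := C.ja1; have h3 := C.ja2
  have h4 := C.qj'.symm; have h5 := C.jb1; have h6 := C.jb2
  rcases h with ⟨hm, -, -⟩ | h
  · exact outdeg_zero_not_mem C.outj hm
  · tauto

lemma reach_from_i {z : ℕ} (h : Relation.ReflTransGen (X i j a1 a2 b1 b2 p q G).ArcRel i z) : z = i := by
  rcases Relation.ReflTransGen.cases_head h with h | ⟨c, hc, -⟩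
  · exact h.symm
  · exact absurd hc (X_no_out_i C)

lemma reach_from_j {z : ℕ} (h : Relation.ReflTransGen (X i j a1 a2 b1 b2 p q G).ArcRel j z) : z = j := by
  rcases Relation.ReflTransGen.cases_head h with h | ⟨c, hc, -⟩
  · exact h.symm
  · exact absurd hc (X_no_out_j C)

lemma arcs_from_a2 {y : ℕ} (h : (X i j a1 a2 b1 b2 p q G).ArcRel a2 y) : y = i := by
  simp only [Dgraph.ArcRel] at*; rw [mem_X_arcs] at h
  have h1 := C.pa2.symm; have h2 := C.d12.symm; have h3 := C.qa2.symm
  have h4 := C.d23.symm; have h5 := C.d24.symm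
  rcases h with ⟨hm, -, -⟩ | h
  · exact absurd hm (C.no_arc_a2_fst)
  · tauto

lemma arcs_from_b2 {y : ℕ} (h : (X i j a1 a2 b1 b2 p q G).ArcRel b2 y) : y = j := by
  simp only [Dgraph.ArcRel] at*; rw [mem_X_arcs] at h
  have h1 := C.pb2.symm; have h2 := C.d14.symm; have h3 := C.qb2.symm
  have h4 := C.d24; have h5 := C.d34.symm
  rcases h with ⟨hm, -, -⟩ | h
  · exact absurd hm (C.no_arc_b2_fst)
  · tauto

lemma reach_from_a2 {z : ℕ} (h : Relation.ReflTransGen (X i j a1 a2 b1 b2 p q G).ArcRel a2 z) : z = a2 ∨ z = i := by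
  rcases Relation.ReflTransGen.cases_head h with h | ⟨c, hc, hr⟩
  · exact Or.inl h.symm
  · have := arcs_from_a2 C hc; subst this
    exact Or.inr (reach_from_i C hr)

lemma reach_from_b2 {z : ℕ} (h : Relation.ReflTransGen (X i j a1 a2 b1 b2 p q G).ArcRel b2 z) : z = b2 ∨ z = j := by
  rcases Relation.ReflTransGen.cases_head h with h | ⟨c, hc, hr⟩
  · exact Or.inl h.symm
  · have := arcs_from_b2 C hc; subst this
    exact Or.inr (reach_from_j C hr)

lemma arcs_from_a1 {y : ℕ} (h : (X i j a1 a2 b1 b2 p q G).ArcRel a1 y) : y = a2 ∨ y = b2 := by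
  simp only [Dgraph.ArcRel] at*; rw [mem_X_arcs] at h
  have h1 := C.pa1.symm; have h2 := C.d12; have h3 := C.qa1.symm
  have h4 := C.d13; have h5 := C.d14
  rcases h with ⟨hm, -, -⟩ | h
  · exact absurd hm (C.no_arc_a1_fst)
  · tauto

lemma arcs_from_b1 {y : ℕ} (h : (X i j a1 a2 b1 b2 p q G).ArcRel b1 y) : y = b2 ∨ y = a2 := by
  simp only [Dgraph.ArcRel] at*; rw [mem_X_arcs] at h
  have h1 := C.pb1.symm; have h2 := C.d13.symm; have h3 := C.qb1.symm
  have h4 := C.d23; have h5 := C.d34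
  rcases h with ⟨hm, -, -⟩ | h
  · exact absurd hm (C.no_arc_b1_fst)
  · tauto

lemma reach_from_a1 {z : ℕ} (h : Relation.ReflTransGen (X i j a1 a2 b1 b2 p q G).ArcRel a1 z) :
    z = a1 ∨ z = a2 ∨ z = i ∨ z = b2 ∨ z = j := by
  rcases Relation.ReflTransGen.cases_head h with h | ⟨c, hc, hr⟩
  · exact Or.inl h.symm
  · rcases arcs_from_a1 C hc with rfl | rfl
    · rcases reach_from_a2 C hr with rfl | rfl <;> tauto
    · rcases reach_from_b2 C hr with rfl | rfl <;> tauto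

lemma reach_from_b1 {z : ℕ} (h : Relation.ReflTransGen (X i j a1 a2 b1 b2 p q G).ArcRel b1 z) :
    z = b1 ∨ z = b2 ∨ z = j ∨ z = a2 ∨ z = i := by
  rcases Relation.ReflTransGen.cases_head h with h | ⟨c, hc, hr⟩
  · exact Or.inl h.symm
  · rcases arcs_from_b1 C hc with rfl | rfl
    · rcases reach_from_b2 C hr with rfl | rfl <;> tauto
    · rcases reach_from_a2 C hr with rfl | rfl <;> tauto

/-- Any reachability in the crossover graph either ends in the gadget or lifts to `G`. -/
lemma reach_old {d z : ℕ} (h : Relation.ReflTransGen (X i j a1 a2 b1 b2 p q G).ArcRel d z) :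
    (z = a1 ∨ z = a2 ∨ z = b1 ∨ z = b2 ∨ z = i ∨ z = j) ∨
      Relation.ReflTransGen G.ArcRel d z := by
  induction h with
  | refl => exact Or.inr Relation.ReflTransGen.refl
  | tail hdm harc ih =>
    rename_i m z'
    simp only [Dgraph.ArcRel] at*; rw [mem_X_arcs] at harc
    rcases harc with ⟨hm, -, -⟩ | hg
    · rcases ih with hGS | hpathG
      · exfalso
        rcases hGS with rfl | rfl | rfl | rfl | rfl | rfl
        · exact C.no_arc_a1_fst hm
        · exact C.no_arc_a2_fst hm
        · exact C.no_arc_b1_fst hm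
        · exact C.no_arc_b2_fst hm
        · exact outdeg_zero_not_mem C.outi hm
        · exact outdeg_zero_not_mem C.outj hm
      · exact Or.inr (hpathG.tail hm)
    · left
      rcases hg with ⟨-, rfl⟩ | ⟨-, rfl⟩ | ⟨-, rfl⟩ | ⟨-, rfl⟩ | ⟨-, rfl⟩ | ⟨-, rfl⟩ |
        ⟨-, rfl⟩ | ⟨-, rfl⟩ <;> tauto

lemma X_acyclic (hA : G.Acyclic) : (X i j a1 a2 b1 b2 p q G).Acyclic := by
  intro x y harc hpath
  simp only [Dgraph.ArcRel] at*; rw [mem_X_arcs] at harc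
  rcases harc with ⟨hG, hne1, hne2⟩ | hg
  · rcases reach_old C hpath with hGS | hpathG
    · rcases hGS with rfl | rfl | rfl | rfl | rfl | rfl
      · exact C.no_arc_a1_fst hG
      · exact C.no_arc_a2_fst hG
      · exact C.no_arc_b1_fst hG
      · exact C.no_arc_b2_fst hG
      · exact outdeg_zero_not_mem C.outi hG
      · exact outdeg_zero_not_mem C.outj hG
    · exact hA x y hG hpathG
  · rcases hg with ⟨rfl, rfl⟩ | ⟨rfl, rfl⟩ | ⟨rfl, rfl⟩ | ⟨rfl, rfl⟩ | ⟨rfl, rfl⟩ |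
      ⟨rfl, rfl⟩ | ⟨rfl, rfl⟩ | ⟨rfl, rfl⟩
    · rcases reach_from_a1 C hpath with h | h | h | h | h
      · exact C.pa1 h
      · exact C.pa2 h
      · exact C.pi' h
      · exact C.pb2 h
      · exact C.pj h
    · rcases reach_from_a2 C hpath with h | h
      · exact C.d12 h
      · exact C.ia1 h.symm
    · exact C.ia2 (reach_from_i C hpath).symm
    · rcases reach_from_b1 C hpath with h | h | h | h | h
      · exact C.qb1 h
      · exact C.qb2 h
      · exact C.qj' h
      · exact C.qa2 h
      · exact C.qi h
    · rcases reach_from_b2 C hpath with h | h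
      · exact C.d34 h
      · exact C.jb1 h.symm
    · exact C.jb2 ((reach_from_j C hpath).symm)
    · rcases reach_from_b2 C hpath with h | h
      · exact C.d14 h
      · exact C.ja1 h.symm
    · rcases reach_from_a2 C hpath with h | h
      · exact C.d23 h.symm
      · exact C.ib1 h.symm
  
end Reach

end AuxCross

namespace AuxCross

variable {i j a1 a2 b1 b2 p q : ℕ} {G : Dgraph}

section Degrees

variable (C : Ctx i j a1 a2 b1 b2 p q G)
include C

lemma X_filter_head_old {w : ℕ} (h1 : w ≠ i) (h2 : w ≠ j) (h3 : w ≠ a1) (h4 : w ≠ a2)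
    (h5 : w ≠ b1) (h6 : w ≠ b2) :
    ((X i j a1 a2 b1 b2 p q G).arcs.filter fun a => a.2 = w) =
      (G.arcs.filter fun a => a.2 = w) := by
  ext ⟨x, y⟩
  simp only [Finset.mem_filter, mem_X_arcs]
  constructor
  · rintro ⟨h, rfl⟩
    rcases h with ⟨hm, -, -⟩ | h
    · exact ⟨hm, rfl⟩
    · exfalso; rcases h with ⟨-, h⟩ | ⟨-, h⟩ | ⟨-, h⟩ | ⟨-, h⟩ | ⟨-, h⟩ | ⟨-, h⟩ | ⟨-, h⟩ | ⟨-, h⟩ <;> simp_all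
  · rintro ⟨hm, rfl⟩
    exact ⟨Or.inl ⟨hm, fun hc => h1 hc.2, fun hc => h2 hc.2⟩, rfl⟩

lemma X_filter_head_i :
    ((X i j a1 a2 b1 b2 p q G).arcs.filter fun a => a.2 = i) = {(a2, i)} := by
  ext ⟨x, y⟩
  simp only [Finset.mem_filter, mem_X_arcs, Finset.mem_singleton, Prod.mk.injEq]
  constructor
  · rintro ⟨h, rfl⟩
    rcases h with ⟨hm, hne1, -⟩ | h
    · exact absurd ⟨indeg_one_eq C.indi C.hpi hm, rfl⟩ hne1
    · have := C.ia1; have := C.ia2; have := C.ib1; have := C.ib2; have := C.hij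
      rcases h with ⟨-, h⟩ | ⟨-, h⟩ | ⟨h', h⟩ | ⟨-, h⟩ | ⟨-, h⟩ | ⟨-, h⟩ | ⟨-, h⟩ | ⟨-, h⟩ <;> simp_all
  · rintro ⟨rfl, rfl⟩
    exact ⟨Or.inr (Or.inr (Or.inr (Or.inl ⟨rfl, rfl⟩))), rfl⟩

lemma X_filter_head_j :
    ((X i j a1 a2 b1 b2 p q G).arcs.filter fun a => a.2 = j) = {(b2, j)} := by
  ext ⟨x, y⟩
  simp only [Finset.mem_filter, mem_X_arcs, Finset.mem_singleton, Prod.mk.injEq]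
  constructor
  · rintro ⟨h, rfl⟩
    rcases h with ⟨hm, -, hne2⟩ | h
    · exact absurd ⟨indeg_one_eq C.indj C.hqj hm, rfl⟩ hne2
    · have := C.ja1; have := C.ja2; have := C.jb1; have := C.jb2; have := C.hij
      rcases h with ⟨-, h⟩ | ⟨-, h⟩ | ⟨-, h⟩ | ⟨-, h⟩ | ⟨-, h⟩ | ⟨h', h⟩ | ⟨-, h⟩ | ⟨-, h⟩ <;> simp_all
  · rintro ⟨rfl, rfl⟩
    exact ⟨Or.inr (Or.inr (Or.inr (Or.inr (Or.inr (Or.inr (Or.inl ⟨rfl, rfl⟩)))))), rfl⟩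

lemma X_filter_head_a1 :
    ((X i j a1 a2 b1 b2 p q G).arcs.filter fun a => a.2 = a1) = {(p, a1)} := by
  ext ⟨x, y⟩
  simp only [Finset.mem_filter, mem_X_arcs, Finset.mem_singleton, Prod.mk.injEq]
  constructor
  · rintro ⟨h, rfl⟩
    rcases h with ⟨hm, -, -⟩ | h
    · exact absurd hm C.no_arc_a1_snd
    · have := C.d12; have := C.d13; have := C.d14; have := C.ia1; have := C.ja1
      rcases h with ⟨h', h⟩ | ⟨-, h⟩ | ⟨-, h⟩ | ⟨-, h⟩ | ⟨-, h⟩ | ⟨-, h⟩ | ⟨-, h⟩ | ⟨-, h⟩ <;> simp_all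
  · rintro ⟨rfl, rfl⟩
    exact ⟨Or.inr (Or.inl ⟨rfl, rfl⟩), rfl⟩

lemma X_filter_head_b1 :
    ((X i j a1 a2 b1 b2 p q G).arcs.filter fun a => a.2 = b1) = {(q, b1)} := by
  ext ⟨x, y⟩
  simp only [Finset.mem_filter, mem_X_arcs, Finset.mem_singleton, Prod.mk.injEq]
  constructor
  · rintro ⟨h, rfl⟩
    rcases h with ⟨hm, -, -⟩ | h
    · exact absurd hm C.no_arc_b1_snd
    · have := C.d13; have := C.d23; have := C.d34; have := C.ib1; have := C.jb1
      rcases h with ⟨-, h⟩ | ⟨-, h⟩ | ⟨-, h⟩ | ⟨h', h⟩ | ⟨-, h⟩ | ⟨-, h⟩ | ⟨-, h⟩ | ⟨-, h⟩ <;> simp_all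
  · rintro ⟨rfl, rfl⟩
    exact ⟨Or.inr (Or.inr (Or.inr (Or.inr (Or.inl ⟨rfl, rfl⟩)))), rfl⟩

lemma X_filter_head_a2 :
    ((X i j a1 a2 b1 b2 p q G).arcs.filter fun a => a.2 = a2) = {(a1, a2), (b1, a2)} := by
  ext ⟨x, y⟩
  simp only [Finset.mem_filter, mem_X_arcs, Finset.mem_insert, Finset.mem_singleton,
    Prod.mk.injEq]
  constructor
  · rintro ⟨h, rfl⟩
    rcases h with ⟨hm, -, -⟩ | h
    · exact absurd hm C.no_arc_a2_snd
    · have := C.d12; have := C.d23; have := C.d24; have := C.ia2; have := C.ja2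
      rcases h with ⟨-, h⟩ | ⟨h', h⟩ | ⟨-, h⟩ | ⟨-, h⟩ | ⟨-, h⟩ | ⟨-, h⟩ | ⟨-, h⟩ | ⟨h', h⟩ <;> simp_all
  · rintro (⟨rfl, rfl⟩ | ⟨rfl, rfl⟩)
    · exact ⟨Or.inr (Or.inr (Or.inl ⟨rfl, rfl⟩)), rfl⟩
    · exact ⟨Or.inr (Or.inr (Or.inr (Or.inr (Or.inr (Or.inr (Or.inr (Or.inr ⟨rfl, rfl⟩))))))), rfl⟩

lemma X_filter_head_b2 :
    ((X i j a1 a2 b1 b2 p q G).arcs.filter fun a => a.2 = b2) = {(b1, b2), (a1, b2)} := by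
  ext ⟨x, y⟩
  simp only [Finset.mem_filter, mem_X_arcs, Finset.mem_insert, Finset.mem_singleton,
    Prod.mk.injEq]
  constructor
  · rintro ⟨h, rfl⟩
    rcases h with ⟨hm, -, -⟩ | h
    · exact absurd hm C.no_arc_b2_snd
    · have := C.d14; have := C.d24; have := C.d34; have := C.ib2; have := C.jb2
      rcases h with ⟨-, h⟩ | ⟨-, h⟩ | ⟨-, h⟩ | ⟨-, h⟩ | ⟨h', h⟩ | ⟨-, h⟩ | ⟨h', h⟩ | ⟨-, h⟩ <;> simp_all
  · rintro (⟨rfl, rfl⟩ | ⟨rfl, rfl⟩)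
    · exact ⟨Or.inr (Or.inr (Or.inr (Or.inr (Or.inr (Or.inl ⟨rfl, rfl⟩))))), rfl⟩
    · exact ⟨Or.inr (Or.inr (Or.inr (Or.inr (Or.inr (Or.inr (Or.inr (Or.inl ⟨rfl, rfl⟩))))))), rfl⟩

lemma X_filter_tail_i :
    ((X i j a1 a2 b1 b2 p q G).arcs.filter fun a => a.1 = i) = ∅ := by
  ext ⟨x, y⟩
  simp only [Finset.mem_filter, mem_X_arcs, Finset.notMem_empty, iff_false, not_and]
  rintro h rfl
  rcases h with ⟨hm, -, -⟩ | h
  · exact outdeg_zero_not_mem C.outi hm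
  · have := C.pi'; have := C.ia1; have := C.ia2; have := C.qi; have := C.ib1; have := C.ib2
    rcases h with ⟨h, -⟩ | ⟨h, -⟩ | ⟨h, -⟩ | ⟨h, -⟩ | ⟨h, -⟩ | ⟨h, -⟩ | ⟨h, -⟩ | ⟨h, -⟩ <;> simp_all

lemma X_filter_tail_j :
    ((X i j a1 a2 b1 b2 p q G).arcs.filter fun a => a.1 = j) = ∅ := by
  ext ⟨x, y⟩
  simp only [Finset.mem_filter, mem_X_arcs, Finset.notMem_empty, iff_false, not_and]
  rintro h rfl
  rcases h with ⟨hm, -, -⟩ | h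
  · exact outdeg_zero_not_mem C.outj hm
  · have := C.pj; have := C.ja1; have := C.ja2; have := C.qj'; have := C.jb1; have := C.jb2
    rcases h with ⟨h, -⟩ | ⟨h, -⟩ | ⟨h, -⟩ | ⟨h, -⟩ | ⟨h, -⟩ | ⟨h, -⟩ | ⟨h, -⟩ | ⟨h, -⟩ <;> simp_all

lemma X_filter_tail_a1 :
    ((X i j a1 a2 b1 b2 p q G).arcs.filter fun a => a.1 = a1) = {(a1, a2), (a1, b2)} := by
  ext ⟨x, y⟩
  simp only [Finset.mem_filter, mem_X_arcs, Finset.mem_insert, Finset.mem_singleton,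
    Prod.mk.injEq]
  constructor
  · rintro ⟨h, rfl⟩
    rcases h with ⟨hm, -, -⟩ | h
    · exact absurd hm C.no_arc_a1_fst
    · have := C.pa1; have := C.d12; have := C.qa1; have := C.d13; have := C.d14
      rcases h with ⟨h, -⟩ | ⟨-, h⟩ | ⟨h, -⟩ | ⟨h, -⟩ | ⟨h, -⟩ | ⟨h, -⟩ | ⟨-, h⟩ | ⟨h, -⟩ <;> simp_all
  · rintro (⟨rfl, rfl⟩ | ⟨rfl, rfl⟩)
    · exact ⟨Or.inr (Or.inr (Or.inl ⟨rfl, rfl⟩)), rfl⟩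
    · exact ⟨Or.inr (Or.inr (Or.inr (Or.inr (Or.inr (Or.inr (Or.inr (Or.inl ⟨rfl, rfl⟩))))))), rfl⟩

lemma X_filter_tail_b1 :
    ((X i j a1 a2 b1 b2 p q G).arcs.filter fun a => a.1 = b1) = {(b1, b2), (b1, a2)} := by
  ext ⟨x, y⟩
  simp only [Finset.mem_filter, mem_X_arcs, Finset.mem_insert, Finset.mem_singleton,
    Prod.mk.injEq]
  constructor
  · rintro ⟨h, rfl⟩
    rcases h with ⟨hm, -, -⟩ | h
    · exact absurd hm C.no_arc_b1_fst
    · have := C.pb1; have := C.d13; have := C.qb1; have := C.d23; have := C.d34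
      rcases h with ⟨h, -⟩ | ⟨h, -⟩ | ⟨h, -⟩ | ⟨h, -⟩ | ⟨-, h⟩ | ⟨h, -⟩ | ⟨h, -⟩ | ⟨-, h⟩ <;> simp_all
  · rintro (⟨rfl, rfl⟩ | ⟨rfl, rfl⟩)
    · exact ⟨Or.inr (Or.inr (Or.inr (Or.inr (Or.inr (Or.inl ⟨rfl, rfl⟩))))), rfl⟩
    · exact ⟨Or.inr (Or.inr (Or.inr (Or.inr (Or.inr (Or.inr (Or.inr (Or.inr ⟨rfl, rfl⟩))))))), rfl⟩

lemma X_filter_tail_a2 :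
    ((X i j a1 a2 b1 b2 p q G).arcs.filter fun a => a.1 = a2) = {(a2, i)} := by
  ext ⟨x, y⟩
  simp only [Finset.mem_filter, mem_X_arcs, Finset.mem_singleton, Prod.mk.injEq]
  constructor
  · rintro ⟨h, rfl⟩
    rcases h with ⟨hm, -, -⟩ | h
    · exact absurd hm C.no_arc_a2_fst
    · have := C.pa2; have := C.d12; have := C.qa2; have := C.d23; have := C.d24
      rcases h with ⟨h, -⟩ | ⟨h, -⟩ | ⟨-, h⟩ | ⟨h, -⟩ | ⟨h, -⟩ | ⟨h, -⟩ | ⟨h, -⟩ | ⟨h, -⟩ <;> simp_all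
  · rintro ⟨rfl, rfl⟩
    exact ⟨Or.inr (Or.inr (Or.inr (Or.inl ⟨rfl, rfl⟩))), rfl⟩

lemma X_filter_tail_b2 :
    ((X i j a1 a2 b1 b2 p q G).arcs.filter fun a => a.1 = b2) = {(b2, j)} := by
  ext ⟨x, y⟩
  simp only [Finset.mem_filter, mem_X_arcs, Finset.mem_singleton, Prod.mk.injEq]
  constructor
  · rintro ⟨h, rfl⟩
    rcases h with ⟨hm, -, -⟩ | h
    · exact absurd hm C.no_arc_b2_fst
    · have := C.pb2; have := C.d14; have := C.qb2; have := C.d24; have := C.d34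
      rcases h with ⟨h, -⟩ | ⟨h, -⟩ | ⟨h, -⟩ | ⟨h, -⟩ | ⟨h, -⟩ | ⟨-, h⟩ | ⟨h, -⟩ | ⟨h, -⟩ <;> simp_all
  · rintro ⟨rfl, rfl⟩
    exact ⟨Or.inr (Or.inr (Or.inr (Or.inr (Or.inr (Or.inr (Or.inl ⟨rfl, rfl⟩)))))), rfl⟩

/-- In-degrees of old vertices are unchanged by the crossover. -/
lemma X_indeg_old {w : ℕ} (h3 : w ≠ a1) (h4 : w ≠ a2) (h5 : w ≠ b1) (h6 : w ≠ b2) :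
    (X i j a1 a2 b1 b2 p q G).indeg w = G.indeg w := by
  by_cases h1 : w = i
  · subst h1
    unfold Dgraph.indeg
    rw [X_filter_head_i C, indeg_one_filter C.indi C.hpi]
    simp
  by_cases h2 : w = j
  · subst h2
    unfold Dgraph.indeg
    rw [X_filter_head_j C, indeg_one_filter C.indj C.hqj]
    simp
  unfold Dgraph.indeg
  rw [X_filter_head_old C h1 h2 h3 h4 h5 h6]

end Degrees

end AuxCross

namespace AuxCross

set_option linter.unusedSectionVars false

variable {i j a1 a2 b1 b2 p q : ℕ} {G : Dgraph}

section Degrees2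

variable (C : Ctx i j a1 a2 b1 b2 p q G)
include C

lemma X_filter_tail_old {w : ℕ} (hp : w ≠ p) (hq : w ≠ q) (h3 : w ≠ a1) (h4 : w ≠ a2)
    (h5 : w ≠ b1) (h6 : w ≠ b2) :
    ((X i j a1 a2 b1 b2 p q G).arcs.filter fun a => a.1 = w) =
      (G.arcs.filter fun a => a.1 = w) := by
  ext ⟨x, y⟩
  simp only [Finset.mem_filter, mem_X_arcs]
  constructor
  · rintro ⟨h, rfl⟩
    rcases h with ⟨hm, -, -⟩ | h
    · exact ⟨hm, rfl⟩
    · exfalso; rcases h with ⟨h, -⟩ | ⟨h, -⟩ | ⟨h, -⟩ | ⟨h, -⟩ | ⟨h, -⟩ | ⟨h, -⟩ | ⟨h, -⟩ | ⟨h, -⟩ <;> simp_all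
  · rintro ⟨hm, rfl⟩
    exact ⟨Or.inl ⟨hm, fun hc => hp hc.1, fun hc => hq hc.1⟩, rfl⟩

lemma X_filter_tail_p (hpq : p ≠ q) :
    ((X i j a1 a2 b1 b2 p q G).arcs.filter fun a => a.1 = p) =
      insert (p, a1) ((G.arcs.filter fun a => a.1 = p).erase (p, i)) := by
  ext ⟨x, y⟩
  simp only [Finset.mem_filter, mem_X_arcs, Finset.mem_insert, Finset.mem_erase,
    Prod.mk.injEq]
  constructor
  · rintro ⟨h, rfl⟩
    rcases h with ⟨hm, hne1, -⟩ | h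
    · refine Or.inr ⟨?_, hm, rfl⟩
      intro hc; rw [Prod.mk.injEq] at hc; exact hne1 ⟨rfl, hc.2⟩
    · have := C.pa2; have := C.pb1; have := C.pb2
      have h1 := C.pa1; have h2 := C.d12.symm; have h3 := C.d13.symm; have h4 := C.d14.symm
      rcases h with ⟨-, h⟩ | ⟨h, -⟩ | ⟨h, -⟩ | ⟨h, -⟩ | ⟨h, -⟩ | ⟨h, -⟩ | ⟨h, -⟩ | ⟨h, -⟩ <;> simp_all
  · rintro (⟨rfl, rfl⟩ | ⟨hne, hm, rfl⟩)
    · exact ⟨Or.inr (Or.inl ⟨rfl, rfl⟩), rfl⟩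
    · refine ⟨Or.inl ⟨hm, ?_, fun hc => hpq hc.1.symm.symm⟩, rfl⟩
      · intro hc; exact hne (by rw [Prod.mk.injEq]; exact ⟨hc.1, hc.2⟩)
  
lemma X_filter_tail_q (hpq : p ≠ q) :
    ((X i j a1 a2 b1 b2 p q G).arcs.filter fun a => a.1 = q) =
      insert (q, b1) ((G.arcs.filter fun a => a.1 = q).erase (q, j)) := by
  ext ⟨x, y⟩
  simp only [Finset.mem_filter, mem_X_arcs, Finset.mem_insert, Finset.mem_erase,
    Prod.mk.injEq]
  constructor
  · rintro ⟨h, rfl⟩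
    rcases h with ⟨hm, -, hne2⟩ | h
    · refine Or.inr ⟨?_, hm, rfl⟩
      intro hc; rw [Prod.mk.injEq] at hc; exact hne2 ⟨rfl, hc.2⟩
    · have := C.qa1; have := C.qa2; have := C.qb2
      have h1 := C.qb1; have h2 := C.d13; have h3 := C.d23.symm; have h4 := C.d34.symm
      rcases h with ⟨h, -⟩ | ⟨h, -⟩ | ⟨h, -⟩ | ⟨-, h⟩ | ⟨h, -⟩ | ⟨h, -⟩ | ⟨h, -⟩ | ⟨h, -⟩ <;> simp_all
  · rintro (⟨rfl, rfl⟩ | ⟨hne, hm, rfl⟩)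
    · exact ⟨Or.inr (Or.inr (Or.inr (Or.inr (Or.inl ⟨rfl, rfl⟩)))), rfl⟩
    · refine ⟨Or.inl ⟨hm, fun hc => hpq hc.1.symm, ?_⟩, rfl⟩
      · intro hc; exact hne (by rw [Prod.mk.injEq]; exact ⟨hc.1, hc.2⟩)

lemma X_filter_tail_pq (hpq : p = q) :
    ((X i j a1 a2 b1 b2 p q G).arcs.filter fun a => a.1 = p) =
      insert (p, a1) (insert (p, b1)
        (((G.arcs.filter fun a => a.1 = p).erase (p, i)).erase (p, j))) := by
  subst hpq
  ext ⟨x, y⟩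
  simp only [Finset.mem_filter, mem_X_arcs, Finset.mem_insert, Finset.mem_erase,
    Prod.mk.injEq]
  constructor
  · rintro ⟨h, rfl⟩
    rcases h with ⟨hm, hne1, hne2⟩ | h
    · refine Or.inr (Or.inr ⟨?_, ?_, hm, rfl⟩)
      · intro hc; rw [Prod.mk.injEq] at hc; exact hne2 ⟨rfl, hc.2⟩
      · intro hc; rw [Prod.mk.injEq] at hc; exact hne1 ⟨rfl, hc.2⟩
    · have := C.pa2; have := C.pb2
      have h1 := C.pa1; have h1' := C.pb1
      have h2 := C.d12.symm; have h3 := C.d13.symm; have h4 := C.d14.symm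
      have h5 := C.d23; have h6 := C.d34.symm
      rcases h with ⟨-, h⟩ | ⟨h, -⟩ | ⟨h, -⟩ | ⟨-, h⟩ | ⟨h, -⟩ | ⟨h, -⟩ | ⟨h, -⟩ | ⟨h, -⟩ <;> simp_all
  · rintro (⟨rfl, rfl⟩ | ⟨rfl, rfl⟩ | ⟨hne2, hne1, hm, rfl⟩)
    · exact ⟨Or.inr (Or.inl ⟨rfl, rfl⟩), rfl⟩
    · exact ⟨Or.inr (Or.inr (Or.inr (Or.inr (Or.inl ⟨rfl, rfl⟩)))), rfl⟩
    · refine ⟨Or.inl ⟨hm, ?_, ?_⟩, rfl⟩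
      · intro hc; exact hne1 (by rw [Prod.mk.injEq]; exact ⟨hc.1, hc.2⟩)
      · intro hc; exact hne2 (by rw [Prod.mk.injEq]; exact ⟨hc.1, hc.2⟩)

/-- Out-degrees of old vertices are unchanged by the crossover. -/
lemma X_outdeg_old {w : ℕ} (h3 : w ≠ a1) (h4 : w ≠ a2) (h5 : w ≠ b1) (h6 : w ≠ b2) :
    (X i j a1 a2 b1 b2 p q G).outdeg w = G.outdeg w := by
  by_cases hp : w = p
  · subst hp
    by_cases hpq : w = q
    · unfold Dgraph.outdeg
      rw [X_filter_tail_pq C hpq]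
      have hmi : (w, i) ∈ G.arcs.filter fun a => a.1 = w := by
        simp [Finset.mem_filter, C.hpi]
      have hmj : (w, j) ∈ (G.arcs.filter fun a => a.1 = w).erase (w, i) := by
        refine Finset.mem_erase.2 ⟨?_, Finset.mem_filter.2 ⟨by rw [hpq]; exact C.hqj, rfl⟩⟩
        simp only [ne_eq, Prod.mk.injEq, not_and]
        exact fun _ => C.hij.symm
      have hcard : 2 ≤ (G.arcs.filter fun a => a.1 = w).card := by
        have hsub : ({(w, i), (w, j)} : Finset (ℕ × ℕ)) ⊆ G.arcs.filter fun a => a.1 = w := by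
          intro a ha
          simp only [Finset.mem_insert, Finset.mem_singleton] at ha
          rcases ha with rfl | rfl
          · exact hmi
          · exact Finset.mem_filter.2 ⟨by rw [hpq]; exact C.hqj, rfl⟩
        have := Finset.card_le_card hsub
        have hne : (w, i) ∉ ({(w, j)} : Finset (ℕ × ℕ)) := by
          simp only [Finset.mem_singleton, Prod.mk.injEq, not_and]
          exact fun _ => C.hij
        rwa [Finset.card_insert_of_notMem hne, Finset.card_singleton] at this
      have hb1 : (w, b1) ∉ ((G.arcs.filter fun a => a.1 = w).erase (w, i)).erase (w, j) := by
        intro hc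
        exact C.no_arc_b1_snd (Finset.mem_filter.1 (Finset.mem_erase.1 (Finset.mem_erase.1 hc).2).2).1
      have ha1 : (w, a1) ∉ insert (w, b1) (((G.arcs.filter fun a => a.1 = w).erase (w, i)).erase (w, j)) := by
        intro hc
        rcases Finset.mem_insert.1 hc with h | h
        · exact C.d13 (Prod.ext_iff.1 h).2
        · exact C.no_arc_a1_snd (Finset.mem_filter.1 (Finset.mem_erase.1 (Finset.mem_erase.1 h).2).2).1
      rw [Finset.card_insert_of_notMem ha1, Finset.card_insert_of_notMem hb1,
        Finset.card_erase_of_mem hmj, Finset.card_erase_of_mem hmi]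
      omega
    · unfold Dgraph.outdeg
      rw [X_filter_tail_p C (fun h => hpq h)]
      have hmi : (w, i) ∈ G.arcs.filter fun a => a.1 = w := by
        simp [Finset.mem_filter, C.hpi]
      have hcard : 1 ≤ (G.arcs.filter fun a => a.1 = w).card := by
        exact Finset.card_pos.2 ⟨_, hmi⟩
      have ha1 : (w, a1) ∉ (G.arcs.filter fun a => a.1 = w).erase (w, i) := by
        intro hc
        exact C.no_arc_a1_snd (Finset.mem_filter.1 (Finset.mem_erase.1 hc).2).1
      rw [Finset.card_insert_of_notMem ha1, Finset.card_erase_of_mem hmi]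
      omega
  by_cases hq : w = q
  · subst hq
    unfold Dgraph.outdeg
    rw [X_filter_tail_q C (fun h => hp h.symm)]
    have hmj : (w, j) ∈ G.arcs.filter fun a => a.1 = w := by
      simp [Finset.mem_filter, C.hqj]
    have hcard : 1 ≤ (G.arcs.filter fun a => a.1 = w).card := by
      exact Finset.card_pos.2 ⟨_, hmj⟩
    have hb1 : (w, b1) ∉ (G.arcs.filter fun a => a.1 = w).erase (w, j) := by
      intro hc
      exact C.no_arc_b1_snd (Finset.mem_filter.1 (Finset.mem_erase.1 hc).2).1
    rw [Finset.card_insert_of_notMem hb1, Finset.card_erase_of_mem hmj]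
    omega
  unfold Dgraph.outdeg
  rw [X_filter_tail_old C hp hq h3 h4 h5 h6]

/-- Degrees of the gadget vertices. -/
lemma X_indeg_a1 : (X i j a1 a2 b1 b2 p q G).indeg a1 = 1 := by
  unfold Dgraph.indeg; rw [X_filter_head_a1 C]; simp
lemma X_indeg_b1 : (X i j a1 a2 b1 b2 p q G).indeg b1 = 1 := by
  unfold Dgraph.indeg; rw [X_filter_head_b1 C]; simp
lemma X_indeg_a2 : (X i j a1 a2 b1 b2 p q G).indeg a2 = 2 := by
  unfold Dgraph.indeg; rw [X_filter_head_a2 C]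
  have hne : (a1, a2) ∉ ({(b1, a2)} : Finset (ℕ × ℕ)) := by
    simp only [Finset.mem_singleton, Prod.mk.injEq, not_and]
    exact fun h => absurd h C.d13
  rw [Finset.card_insert_of_notMem hne, Finset.card_singleton]
lemma X_indeg_b2 : (X i j a1 a2 b1 b2 p q G).indeg b2 = 2 := by
  unfold Dgraph.indeg; rw [X_filter_head_b2 C]
  have hne : (b1, b2) ∉ ({(a1, b2)} : Finset (ℕ × ℕ)) := by
    simp only [Finset.mem_singleton, Prod.mk.injEq, not_and]
    exact fun h => absurd h C.d13.symm
  rw [Finset.card_insert_of_notMem hne, Finset.card_singleton]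
lemma X_outdeg_a1 : (X i j a1 a2 b1 b2 p q G).outdeg a1 = 2 := by
  unfold Dgraph.outdeg; rw [X_filter_tail_a1 C]
  have hne : (a1, a2) ∉ ({(a1, b2)} : Finset (ℕ × ℕ)) := by
    simp only [Finset.mem_singleton, Prod.mk.injEq, not_and]
    exact fun _ => C.d24
  rw [Finset.card_insert_of_notMem hne, Finset.card_singleton]
lemma X_outdeg_b1 : (X i j a1 a2 b1 b2 p q G).outdeg b1 = 2 := by
  unfold Dgraph.outdeg; rw [X_filter_tail_b1 C]
  have hne : (b1, b2) ∉ ({(b1, a2)} : Finset (ℕ × ℕ)) := by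
    simp only [Finset.mem_singleton, Prod.mk.injEq, not_and]
    exact fun _ => C.d24.symm
  rw [Finset.card_insert_of_notMem hne, Finset.card_singleton]
lemma X_outdeg_a2 : (X i j a1 a2 b1 b2 p q G).outdeg a2 = 1 := by
  unfold Dgraph.outdeg; rw [X_filter_tail_a2 C]; simp
lemma X_outdeg_b2 : (X i j a1 a2 b1 b2 p q G).outdeg b2 = 1 := by
  unfold Dgraph.outdeg; rw [X_filter_tail_b2 C]; simp

/-- The crossover graph has no smoothable vertex if the original has none. -/
lemma X_no_one_one (h : ∀ v : ℕ, ¬(G.indeg v = 1 ∧ G.outdeg v = 1)) :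
    ∀ v : ℕ, ¬((X i j a1 a2 b1 b2 p q G).indeg v = 1 ∧ (X i j a1 a2 b1 b2 p q G).outdeg v = 1) := by
  intro v hv
  by_cases h1 : v = a1
  · subst h1; rw [X_outdeg_a1 C] at hv; omega
  by_cases h2 : v = a2
  · subst h2; rw [X_indeg_a2 C] at hv; omega
  by_cases h3 : v = b1
  · subst h3; rw [X_outdeg_b1 C] at hv; omega
  by_cases h4 : v = b2
  · subst h4; rw [X_indeg_b2 C] at hv; omega
  rw [X_indeg_old C h1 h2 h3 h4, X_outdeg_old C h1 h2 h3 h4] at hv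
  exact h v hv

end Degrees2

end AuxCross

namespace AuxCross

set_option linter.unusedSectionVars false
set_option maxHeartbeats 1000000

variable {i j a1 a2 b1 b2 p q : ℕ} {G G' : Dgraph}

lemma outdeg_one_eq {G : Dgraph} {v x y : ℕ} (h : G.outdeg v = 1) (hx : (v, x) ∈ G.arcs)
    (hy : (v, y) ∈ G.arcs) : x = y := by
  unfold Dgraph.outdeg at h
  rw [Finset.card_eq_one] at h
  obtain ⟨a, ha⟩ := h
  have hx' : (v, x) ∈ G.arcs.filter (fun b => b.1 = v) := by simp [Finset.mem_filter, hx]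
  have hy' : (v, y) ∈ G.arcs.filter (fun b => b.1 = v) := by simp [Finset.mem_filter, hy]
  rw [ha, Finset.mem_singleton] at hx' hy'
  exact (Prod.ext_iff.1 (hx'.trans hy'.symm)).2

lemma indeg_one_eq'' {G : Dgraph} {v x y : ℕ} (h : G.indeg v = 1) (hx : (x, v) ∈ G.arcs)
    (hy : (y, v) ∈ G.arcs) : x = y :=
  indeg_one_eq h hy hx

lemma smoothStep_verts_subset (h : SmoothStep G G') : G'.verts ⊆ G.verts := by
  obtain ⟨u, v, w, -, -, -, -, rfl⟩ := h
  exact Finset.erase_subset _ _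

lemma smoothStep_arcrel (h : SmoothStep G G') {x y : ℕ} (hxy : G'.ArcRel x y) :
    Relation.ReflTransGen G.ArcRel x y := by
  obtain ⟨u, v, w, -, -, huv, hvw, rfl⟩ := h
  simp only [Dgraph.ArcRel, Finset.mem_insert, Finset.mem_erase] at hxy
  rcases hxy with h | h
  · rw [Prod.mk.injEq] at h
    obtain ⟨rfl, rfl⟩ := h
    exact (Relation.ReflTransGen.single huv).tail hvw
  · exact Relation.ReflTransGen.single h.2.2

lemma smoothStep_path (h : SmoothStep G G') {x y : ℕ}
    (hxy : Relation.ReflTransGen G'.ArcRel x y) : Relation.ReflTransGen G.ArcRel x y := by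
  induction hxy with
  | refl => exact Relation.ReflTransGen.refl
  | tail _ harc ih => exact ih.trans (smoothStep_arcrel h harc)

lemma smoothStep_acyclic (h : SmoothStep G G') (hA : G.Acyclic) : G'.Acyclic := by
  intro x y hxy hcyc
  have hpath := smoothStep_path h hcyc
  obtain ⟨u, v, w, -, -, huv, hvw, rfl⟩ := h
  simp only [Dgraph.ArcRel, Finset.mem_insert, Finset.mem_erase] at hxy
  rcases hxy with heq | hmem
  · rw [Prod.mk.injEq] at heq
    obtain ⟨rfl, rfl⟩ := heq
    exact hA x v huv ((Relation.ReflTransGen.single hvw).trans hpath)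
  · exact hA x y hmem.2.2 hpath

lemma acyclic_no_loop {G : Dgraph} (hA : G.Acyclic) {v : ℕ} : (v, v) ∉ G.arcs :=
  fun h => hA v v h Relation.ReflTransGen.refl

/-- Lifting one smoothing step through the crossover construction. -/
lemma smoothStep_lift (C : Ctx i j a1 a2 b1 b2 p q G) (hA : G.Acyclic)
    (hs : SmoothStep G G') :
    ∃ p' q', Ctx i j a1 a2 b1 b2 p' q' G' ∧
      SmoothStep (X i j a1 a2 b1 b2 p q G) (X i j a1 a2 b1 b2 p' q' G') := by
  obtain ⟨u, v, w, hin, hout, huv, hvw, rfl⟩ := hs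
  have huv' : u ≠ v := fun h => acyclic_no_loop hA (h ▸ huv)
  have hvw' : v ≠ w := fun h => acyclic_no_loop hA (h ▸ hvw)
  have huw : u ≠ w := fun h => hA u v huv (h ▸ Relation.ReflTransGen.single hvw)
  have hvi : v ≠ i := by
    intro h; subst h; rw [C.outi] at hout; exact one_ne_zero hout.symm
  have hvj : v ≠ j := by
    intro h; subst h; rw [C.outj] at hout; exact one_ne_zero hout.symm
  have hui : u ≠ i := fun h => outdeg_zero_not_mem C.outi (h ▸ huv)
  have huj : u ≠ j := fun h => outdeg_zero_not_mem C.outj (h ▸ huv)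
  have huverts : u ∈ G.verts := (C.wf _ huv).1
  have hvverts : v ∈ G.verts := (C.wf _ huv).2
  have hwverts : w ∈ G.verts := (C.wf _ hvw).2
  have hua1 : u ≠ a1 := fun h => C.fa1 (h ▸ huverts)
  have hua2 : u ≠ a2 := fun h => C.fa2 (h ▸ huverts)
  have hub1 : u ≠ b1 := fun h => C.fb1 (h ▸ huverts)
  have hub2 : u ≠ b2 := fun h => C.fb2 (h ▸ huverts)
  have hva1 : v ≠ a1 := fun h => C.fa1 (h ▸ hvverts)
  have hva2 : v ≠ a2 := fun h => C.fa2 (h ▸ hvverts)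
  have hvb1 : v ≠ b1 := fun h => C.fb1 (h ▸ hvverts)
  have hvb2 : v ≠ b2 := fun h => C.fb2 (h ▸ hvverts)
  have hwa1 : w ≠ a1 := fun h => C.fa1 (h ▸ hwverts)
  have hwa2 : w ≠ a2 := fun h => C.fa2 (h ▸ hwverts)
  have hwb1 : w ≠ b1 := fun h => C.fb1 (h ▸ hwverts)
  have hwb2 : w ≠ b2 := fun h => C.fb2 (h ▸ hwverts)
  have hpi' := C.pi'; have hpj := C.pj; have hqi := C.qi; have hqj' := C.qj'
  have hia1 := C.ia1; have hia2 := C.ia2; have hib1 := C.ib1; have hib2 := C.ib2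
  have hja1 := C.ja1; have hja2 := C.ja2; have hjb1 := C.jb1; have hjb2 := C.jb2
  have hij := C.hij
  have d12 := C.d12; have d13 := C.d13; have d14 := C.d14
  have d23 := C.d23; have d24 := C.d24; have d34 := C.d34
  have houtv : ∀ y, (v, y) ∈ G.arcs → y = w := fun y hy => outdeg_one_eq hout hy hvw
  have hinv : ∀ x, (x, v) ∈ G.arcs → x = u := fun x hx => indeg_one_eq'' hin hx huv
  have hpiA := C.hpi
  have hqjA := C.hqj
  have hivV := C.hiv
  have hjvV := C.hjv
  have hnoa1 : ∀ z, (z, a1) ∉ G.arcs := fun z => C.no_arc_a1_snd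
  have hnoa2 : ∀ z, (z, a2) ∉ G.arcs := fun z => C.no_arc_a2_snd
  have hnob1 : ∀ z, (z, b1) ∉ G.arcs := fun z => C.no_arc_b1_snd
  have hnob2 : ∀ z, (z, b2) ∉ G.arcs := fun z => C.no_arc_b2_snd
  have hnoa1' : ∀ z, (a1, z) ∉ G.arcs := fun z => C.no_arc_a1_fst
  have hnoa2' : ∀ z, (a2, z) ∉ G.arcs := fun z => C.no_arc_a2_fst
  have hnob1' : ∀ z, (b1, z) ∉ G.arcs := fun z => C.no_arc_b1_fst
  have hnob2' : ∀ z, (b2, z) ∉ G.arcs := fun z => C.no_arc_b2_fst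
  have huniqi : ∀ x, (x, i) ∈ G.arcs → x = p := fun x hx => indeg_one_eq C.indi C.hpi hx
  have huniqj : ∀ x, (x, j) ∈ G.arcs → x = q := fun x hx => indeg_one_eq C.indj C.hqj hx
  have hnoi : ∀ z, (i, z) ∉ G.arcs := fun z => outdeg_zero_not_mem C.outi
  have hnoj : ∀ z, (j, z) ∉ G.arcs := fun z => outdeg_zero_not_mem C.outj
  by_cases hvp : v = p
  · -- the smoothed vertex is the parent of i; new parent is u
    subst hvp
    have hwi : i = w := houtv i C.hpi
    subst hwi
    have hvq : v ≠ q := by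
      intro h
      exact C.hij (houtv j (h ▸ C.hqj)).symm
    have huiA : (u, i) ∉ G.arcs := fun h => huv' (indeg_one_eq'' C.indi h C.hpi)
    refine ⟨u, q, ⟨?_, hij, ?_, ?_, ?_, ?_, d12, d13, d14, d23, d24, d34, ?_, ?_, ?_, ?_, ?_, ?_⟩, ?_⟩
    · -- wellformed
      rintro ⟨x, y⟩ hxy
      simp only [Finset.mem_insert, Finset.mem_erase, Prod.mk.injEq, ne_eq] at hxy ⊢
      rcases hxy with ⟨rfl, rfl⟩ | ⟨h1, h2, h3⟩
      · exact ⟨⟨huv', huverts⟩, ⟨fun hh => hvi hh.symm, hivV⟩⟩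
      · refine ⟨⟨?_, (C.wf _ h3).1⟩, ⟨?_, (C.wf _ h3).2⟩⟩
        · intro hh; subst hh
          exact h1 ⟨rfl, houtv y h3⟩
        · intro hh; subst hh
          exact h2 ⟨hinv x h3, rfl⟩
    · exact fun h => C.fa1 (Finset.mem_of_mem_erase h)
    · exact fun h => C.fa2 (Finset.mem_of_mem_erase h)
    · exact fun h => C.fb1 (Finset.mem_of_mem_erase h)
    · exact fun h => C.fb2 (Finset.mem_of_mem_erase h)
    · -- (u, i) is an arc
      exact Finset.mem_insert_self _ _
    · -- (q, j) is an arc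
      simp only [Finset.mem_insert, Finset.mem_erase, Prod.mk.injEq, ne_eq]
      refine Or.inr ⟨?_, ?_, hqjA⟩
      · intro hc; exact hvq hc.1.symm
      · intro hc; exact hvj hc.2.symm
    · -- indeg i = 1
      show (Finset.filter _ _).card = 1
      have hset : (Finset.filter (fun a => a.2 = i)
          (insert (u, i) ((G.arcs.erase (u, v)).erase (v, i)))) = {(u, i)} := by
        ext ⟨x, y⟩
        simp only [Finset.mem_filter, Finset.mem_insert, Finset.mem_erase,
          Finset.mem_singleton, Prod.mk.injEq, ne_eq]
        constructor
        · rintro ⟨h, rfl⟩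
          rcases h with ⟨rfl, -⟩ | ⟨h1, h2, h3⟩
          · exact ⟨rfl, rfl⟩
          · exact absurd ⟨huniqi x h3, rfl⟩ h1
        · rintro ⟨rfl, rfl⟩
          exact ⟨Or.inl ⟨rfl, rfl⟩, rfl⟩
      rw [hset, Finset.card_singleton]
    · -- indeg j = 1
      show (Finset.filter _ _).card = 1
      have hset : (Finset.filter (fun a => a.2 = j)
          (insert (u, i) ((G.arcs.erase (u, v)).erase (v, i)))) =
          G.arcs.filter (fun a => a.2 = j) := by
        ext ⟨x, y⟩
        simp only [Finset.mem_filter, Finset.mem_insert, Finset.mem_erase, Prod.mk.injEq,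
          ne_eq]
        constructor
        · rintro ⟨h, rfl⟩
          rcases h with ⟨-, rfl⟩ | ⟨-, -, h3⟩
          · exact absurd rfl hij
          · exact ⟨h3, rfl⟩
        · rintro ⟨h, rfl⟩
          refine ⟨Or.inr ⟨?_, ?_, h⟩, rfl⟩
          · intro hc; exact hij hc.2.symm
          · intro hc; exact hvj hc.2.symm
      rw [hset]; exact C.indj
    · -- outdeg i = 0
      show (Finset.filter _ _).card = 0
      rw [Finset.card_eq_zero, Finset.eq_empty_iff_forall_notMem]
      rintro ⟨x, y⟩ hxy
      simp only [Finset.mem_filter, Finset.mem_insert, Finset.mem_erase, Prod.mk.injEq,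
        ne_eq] at hxy
      obtain ⟨h, rfl⟩ := hxy
      rcases h with ⟨rfl, -⟩ | ⟨-, -, h3⟩
      · exact hui rfl
      · exact hnoi y h3
    · -- outdeg j = 0
      show (Finset.filter _ _).card = 0
      rw [Finset.card_eq_zero, Finset.eq_empty_iff_forall_notMem]
      rintro ⟨x, y⟩ hxy
      simp only [Finset.mem_filter, Finset.mem_insert, Finset.mem_erase, Prod.mk.injEq,
        ne_eq] at hxy
      obtain ⟨h, rfl⟩ := hxy
      rcases h with ⟨rfl, -⟩ | ⟨-, -, h3⟩
      · exact huj rfl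
      · exact hnoj y h3
    · -- the lifted smoothing step
      refine ⟨u, v, a1, ?_, ?_, ?_, ?_, ?_⟩
      · rw [X_indeg_old C hva1 hva2 hvb1 hvb2]; exact hin
      · rw [X_outdeg_old C hva1 hva2 hvb1 hvb2]; exact hout
      · rw [mem_X_arcs]
        exact Or.inl ⟨huv, fun hc => huv' hc.1, fun hc => hvj hc.2⟩
      · rw [mem_X_arcs]
        exact Or.inr (Or.inl ⟨rfl, rfl⟩)
      · simp only [X, Dgraph.mk.injEq]
        constructor
        · ext x
          simp only [Finset.mem_union, Finset.mem_erase, Finset.mem_insert,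
            Finset.mem_singleton, ne_eq]
          constructor
          · rintro (⟨h1, h2⟩ | h)
            · exact ⟨h1, Or.inl h2⟩
            · rcases h with rfl | rfl | rfl | rfl
              · exact ⟨fun hh => hva1 hh.symm, Or.inr (Or.inl rfl)⟩
              · exact ⟨fun hh => hva2 hh.symm, Or.inr (Or.inr (Or.inl rfl))⟩
              · exact ⟨fun hh => hvb1 hh.symm, Or.inr (Or.inr (Or.inr (Or.inl rfl)))⟩
              · exact ⟨fun hh => hvb2 hh.symm, Or.inr (Or.inr (Or.inr (Or.inr rfl)))⟩
          · rintro ⟨h1, h2 | h2⟩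
            · exact Or.inl ⟨h1, h2⟩
            · exact Or.inr h2
        · ext ⟨x, y⟩
          simp only [Finset.mem_union, Finset.mem_sdiff, Finset.mem_insert,
            Finset.mem_erase, Finset.mem_singleton, ne_eq, Prod.mk.injEq, not_or]
          constructor
          · rintro (⟨hm, hn1, hn2⟩ | hg)
            · rcases hm with ⟨rfl, rfl⟩ | ⟨hni, hnu, hmA⟩
              · exact absurd ⟨rfl, rfl⟩ hn1
              · refine Or.inr ⟨?_, hnu, Or.inl ⟨hmA, hni, hn2⟩⟩
                rintro ⟨rfl, rfl⟩
                exact hnoa1 _ hmA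
            · rcases hg with ⟨rfl, rfl⟩ | h
              · exact Or.inl ⟨rfl, rfl⟩
              · refine Or.inr ⟨?_, ?_, Or.inr (Or.inr h)⟩
                · rintro ⟨rfl, rfl⟩
                  simp_all
                · rintro ⟨rfl, rfl⟩
                  simp_all
          · rintro (⟨rfl, rfl⟩ | ⟨hn1, hn2, hm⟩)
            · exact Or.inr (Or.inl ⟨rfl, rfl⟩)
            · rcases hm with ⟨hmA, hni, hnq⟩ | hgv
              · refine Or.inl ⟨Or.inr ⟨hni, hn2, hmA⟩, ?_, hnq⟩
                rintro ⟨rfl, rfl⟩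
                exact huiA hmA
              · rcases hgv with ⟨rfl, rfl⟩ | h
                · exact absurd ⟨rfl, rfl⟩ hn1
                · exact Or.inr (Or.inr h)
  · by_cases hvq : v = q
    · -- the smoothed vertex is the parent of j; new parent is u
      subst hvq
      have hwj : j = w := houtv j C.hqj
      subst hwj
      have hujA : (u, j) ∉ G.arcs := fun h => huv' (indeg_one_eq'' C.indj h C.hqj)
      refine ⟨p, u, ⟨?_, hij, ?_, ?_, ?_, ?_, d12, d13, d14, d23, d24, d34, ?_, ?_, ?_, ?_, ?_, ?_⟩, ?_⟩
      · -- wellformed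
        rintro ⟨x, y⟩ hxy
        simp only [Finset.mem_insert, Finset.mem_erase, Prod.mk.injEq, ne_eq] at hxy ⊢
        rcases hxy with ⟨rfl, rfl⟩ | ⟨h1, h2, h3⟩
        · exact ⟨⟨huv', huverts⟩, ⟨fun hh => hvj hh.symm, hjvV⟩⟩
        · refine ⟨⟨?_, (C.wf _ h3).1⟩, ⟨?_, (C.wf _ h3).2⟩⟩
          · intro hh; subst hh
            exact h1 ⟨rfl, houtv y h3⟩
          · intro hh; subst hh
            exact h2 ⟨hinv x h3, rfl⟩
      · exact fun h => C.fa1 (Finset.mem_of_mem_erase h)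
      · exact fun h => C.fa2 (Finset.mem_of_mem_erase h)
      · exact fun h => C.fb1 (Finset.mem_of_mem_erase h)
      · exact fun h => C.fb2 (Finset.mem_of_mem_erase h)
      · -- (p, i) is an arc
        simp only [Finset.mem_insert, Finset.mem_erase, Prod.mk.injEq, ne_eq]
        refine Or.inr ⟨?_, ?_, hpiA⟩
        · intro hc; exact hvp hc.1.symm
        · intro hc; exact hvi hc.2.symm
      · -- (u, j) is an arc
        exact Finset.mem_insert_self _ _
      · -- indeg i = 1
        show (Finset.filter _ _).card = 1
        have hset : (Finset.filter (fun a => a.2 = i)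
            (insert (u, j) ((G.arcs.erase (u, v)).erase (v, j)))) =
            G.arcs.filter (fun a => a.2 = i) := by
          ext ⟨x, y⟩
          simp only [Finset.mem_filter, Finset.mem_insert, Finset.mem_erase, Prod.mk.injEq,
            ne_eq]
          constructor
          · rintro ⟨h, rfl⟩
            rcases h with ⟨-, rfl⟩ | ⟨-, -, h3⟩
            · exact absurd rfl hij.symm
            · exact ⟨h3, rfl⟩
          · rintro ⟨h, rfl⟩
            refine ⟨Or.inr ⟨?_, ?_, h⟩, rfl⟩
            · intro hc; exact hij hc.2
            · intro hc; exact hvi hc.2.symm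
        rw [hset]; exact C.indi
      · -- indeg j = 1
        show (Finset.filter _ _).card = 1
        have hset : (Finset.filter (fun a => a.2 = j)
            (insert (u, j) ((G.arcs.erase (u, v)).erase (v, j)))) = {(u, j)} := by
          ext ⟨x, y⟩
          simp only [Finset.mem_filter, Finset.mem_insert, Finset.mem_erase,
            Finset.mem_singleton, Prod.mk.injEq, ne_eq]
          constructor
          · rintro ⟨h, rfl⟩
            rcases h with ⟨rfl, -⟩ | ⟨h1, h2, h3⟩
            · exact ⟨rfl, rfl⟩
            · exact absurd ⟨huniqj x h3, rfl⟩ h1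
          · rintro ⟨rfl, rfl⟩
            exact ⟨Or.inl ⟨rfl, rfl⟩, rfl⟩
        rw [hset, Finset.card_singleton]
      · -- outdeg i = 0
        show (Finset.filter _ _).card = 0
        rw [Finset.card_eq_zero, Finset.eq_empty_iff_forall_notMem]
        rintro ⟨x, y⟩ hxy
        simp only [Finset.mem_filter, Finset.mem_insert, Finset.mem_erase, Prod.mk.injEq,
          ne_eq] at hxy
        obtain ⟨h, rfl⟩ := hxy
        rcases h with ⟨rfl, -⟩ | ⟨-, -, h3⟩
        · exact hui rfl
        · exact hnoi y h3
      · -- outdeg j = 0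
        show (Finset.filter _ _).card = 0
        rw [Finset.card_eq_zero, Finset.eq_empty_iff_forall_notMem]
        rintro ⟨x, y⟩ hxy
        simp only [Finset.mem_filter, Finset.mem_insert, Finset.mem_erase, Prod.mk.injEq,
          ne_eq] at hxy
        obtain ⟨h, rfl⟩ := hxy
        rcases h with ⟨rfl, -⟩ | ⟨-, -, h3⟩
        · exact huj rfl
        · exact hnoj y h3
      · -- the lifted smoothing step
        refine ⟨u, v, b1, ?_, ?_, ?_, ?_, ?_⟩
        · rw [X_indeg_old C hva1 hva2 hvb1 hvb2]; exact hin
        · rw [X_outdeg_old C hva1 hva2 hvb1 hvb2]; exact hout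
        · rw [mem_X_arcs]
          exact Or.inl ⟨huv, fun hc => hvi hc.2, fun hc => huv' hc.1⟩
        · rw [mem_X_arcs]
          exact Or.inr (Or.inr (Or.inr (Or.inr (Or.inl ⟨rfl, rfl⟩))))
        · simp only [X, Dgraph.mk.injEq]
          constructor
          · ext x
            simp only [Finset.mem_union, Finset.mem_erase, Finset.mem_insert,
              Finset.mem_singleton, ne_eq]
            constructor
            · rintro (⟨h1, h2⟩ | h)
              · exact ⟨h1, Or.inl h2⟩
              · rcases h with rfl | rfl | rfl | rfl
                · exact ⟨fun hh => hva1 hh.symm, Or.inr (Or.inl rfl)⟩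
                · exact ⟨fun hh => hva2 hh.symm, Or.inr (Or.inr (Or.inl rfl))⟩
                · exact ⟨fun hh => hvb1 hh.symm, Or.inr (Or.inr (Or.inr (Or.inl rfl)))⟩
                · exact ⟨fun hh => hvb2 hh.symm, Or.inr (Or.inr (Or.inr (Or.inr rfl)))⟩
            · rintro ⟨h1, h2 | h2⟩
              · exact Or.inl ⟨h1, h2⟩
              · exact Or.inr h2
          · ext ⟨x, y⟩
            simp only [Finset.mem_union, Finset.mem_sdiff, Finset.mem_insert,
              Finset.mem_erase, Finset.mem_singleton, ne_eq, Prod.mk.injEq, not_or]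
            constructor
            · rintro (⟨hm, hn1, hn2⟩ | hg)
              · rcases hm with ⟨rfl, rfl⟩ | ⟨hnj, hnu, hmA⟩
                · exact absurd ⟨rfl, rfl⟩ hn2
                · refine Or.inr ⟨?_, hnu, Or.inl ⟨hmA, hn1, hnj⟩⟩
                  rintro ⟨rfl, rfl⟩
                  exact hnob1 _ hmA
              · rcases hg with ⟨rfl, rfl⟩ | ⟨rfl, rfl⟩ | ⟨rfl, rfl⟩ | ⟨rfl, rfl⟩ |
                  ⟨rfl, rfl⟩ | ⟨rfl, rfl⟩ | ⟨rfl, rfl⟩ | ⟨rfl, rfl⟩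
                · exact Or.inr ⟨fun hc => d13 hc.2, fun hc => hva1 hc.2.symm,
                    Or.inr (Or.inl ⟨rfl, rfl⟩)⟩
                · exact Or.inr ⟨fun hc => hva1 hc.1.symm, fun hc => hva2 hc.2.symm,
                    Or.inr (Or.inr (Or.inl ⟨rfl, rfl⟩))⟩
                · exact Or.inr ⟨fun hc => hva2 hc.1.symm, fun hc => hvi hc.2.symm,
                    Or.inr (Or.inr (Or.inr (Or.inl ⟨rfl, rfl⟩)))⟩
                · exact Or.inl ⟨rfl, rfl⟩
                · exact Or.inr ⟨fun hc => hvb1 hc.1.symm, fun hc => hvb2 hc.2.symm,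
                    Or.inr (Or.inr (Or.inr (Or.inr (Or.inr (Or.inl ⟨rfl, rfl⟩)))))⟩
                · exact Or.inr ⟨fun hc => hvb2 hc.1.symm, fun hc => hvj hc.2.symm,
                    Or.inr (Or.inr (Or.inr (Or.inr (Or.inr (Or.inr (Or.inl ⟨rfl, rfl⟩))))))⟩
                · exact Or.inr ⟨fun hc => hva1 hc.1.symm, fun hc => hvb2 hc.2.symm,
                    Or.inr (Or.inr (Or.inr (Or.inr (Or.inr (Or.inr (Or.inr (Or.inl ⟨rfl, rfl⟩)))))))⟩
                · exact Or.inr ⟨fun hc => hvb1 hc.1.symm, fun hc => hva2 hc.2.symm,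
                    Or.inr (Or.inr (Or.inr (Or.inr (Or.inr (Or.inr (Or.inr (Or.inr ⟨rfl, rfl⟩)))))))⟩
            · rintro (⟨rfl, rfl⟩ | ⟨hn1, hn2, hm⟩)
              · exact Or.inr (Or.inr (Or.inr (Or.inr (Or.inl ⟨rfl, rfl⟩))))
              · rcases hm with ⟨hmA, hni, hnj⟩ | hgv
                · refine Or.inl ⟨Or.inr ⟨hnj, hn2, hmA⟩, hni, ?_⟩
                  rintro ⟨rfl, rfl⟩
                  exact hujA hmA
                · rcases hgv with ⟨rfl, rfl⟩ | ⟨rfl, rfl⟩ | ⟨rfl, rfl⟩ | ⟨rfl, rfl⟩ |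
                    ⟨rfl, rfl⟩ | ⟨rfl, rfl⟩ | ⟨rfl, rfl⟩ | ⟨rfl, rfl⟩
                  · exact Or.inr (Or.inl ⟨rfl, rfl⟩)
                  · exact Or.inr (Or.inr (Or.inl ⟨rfl, rfl⟩))
                  · exact Or.inr (Or.inr (Or.inr (Or.inl ⟨rfl, rfl⟩)))
                  · exact absurd ⟨rfl, rfl⟩ hn1
                  · exact Or.inr (Or.inr (Or.inr (Or.inr (Or.inr (Or.inl ⟨rfl, rfl⟩)))))
                  · exact Or.inr (Or.inr (Or.inr (Or.inr (Or.inr (Or.inr (Or.inl ⟨rfl, rfl⟩))))))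
                  · exact Or.inr (Or.inr (Or.inr (Or.inr (Or.inr (Or.inr (Or.inr (Or.inl ⟨rfl, rfl⟩)))))))
                  · exact Or.inr (Or.inr (Or.inr (Or.inr (Or.inr (Or.inr (Or.inr (Or.inr ⟨rfl, rfl⟩)))))))
    · -- the smoothed vertex is away from both terminal arcs
      have hwi : w ≠ i := fun h => hvp (huniqi v (h ▸ hvw))
      have hwj : w ≠ j := fun h => hvq (huniqj v (h ▸ hvw))
      refine ⟨p, q, ⟨?_, hij, ?_, ?_, ?_, ?_, d12, d13, d14, d23, d24, d34, ?_, ?_, ?_, ?_, ?_, ?_⟩, ?_⟩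
      · -- wellformed
        rintro ⟨x, y⟩ hxy
        simp only [Finset.mem_insert, Finset.mem_erase, Prod.mk.injEq, ne_eq] at hxy ⊢
        rcases hxy with ⟨rfl, rfl⟩ | ⟨h1, h2, h3⟩
        · exact ⟨⟨huv', huverts⟩, ⟨fun hh => hvw' hh.symm, hwverts⟩⟩
        · refine ⟨⟨?_, (C.wf _ h3).1⟩, ⟨?_, (C.wf _ h3).2⟩⟩
          · intro hh; subst hh
            exact h1 ⟨rfl, houtv y h3⟩
          · intro hh; subst hh
            exact h2 ⟨hinv x h3, rfl⟩
      · exact fun h => C.fa1 (Finset.mem_of_mem_erase h)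
      · exact fun h => C.fa2 (Finset.mem_of_mem_erase h)
      · exact fun h => C.fb1 (Finset.mem_of_mem_erase h)
      · exact fun h => C.fb2 (Finset.mem_of_mem_erase h)
      · -- (p, i) is an arc
        simp only [Finset.mem_insert, Finset.mem_erase, Prod.mk.injEq, ne_eq]
        refine Or.inr ⟨?_, ?_, hpiA⟩
        · intro hc; exact hvp hc.1.symm
        · intro hc; exact hvi hc.2.symm
      · -- (q, j) is an arc
        simp only [Finset.mem_insert, Finset.mem_erase, Prod.mk.injEq, ne_eq]
        refine Or.inr ⟨?_, ?_, hqjA⟩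
        · intro hc; exact hvq hc.1.symm
        · intro hc; exact hvj hc.2.symm
      · -- indeg i = 1
        show (Finset.filter _ _).card = 1
        have hset : (Finset.filter (fun a => a.2 = i)
            (insert (u, w) ((G.arcs.erase (u, v)).erase (v, w)))) =
            G.arcs.filter (fun a => a.2 = i) := by
          ext ⟨x, y⟩
          simp only [Finset.mem_filter, Finset.mem_insert, Finset.mem_erase, Prod.mk.injEq,
            ne_eq]
          constructor
          · rintro ⟨h, rfl⟩
            rcases h with ⟨-, rfl⟩ | ⟨-, -, h3⟩
            · exact absurd rfl hwi
            · exact ⟨h3, rfl⟩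
          · rintro ⟨h, rfl⟩
            refine ⟨Or.inr ⟨?_, ?_, h⟩, rfl⟩
            · intro hc; exact hwi hc.2.symm
            · intro hc; exact hvi hc.2.symm
        rw [hset]; exact C.indi
      · -- indeg j = 1
        show (Finset.filter _ _).card = 1
        have hset : (Finset.filter (fun a => a.2 = j)
            (insert (u, w) ((G.arcs.erase (u, v)).erase (v, w)))) =
            G.arcs.filter (fun a => a.2 = j) := by
          ext ⟨x, y⟩
          simp only [Finset.mem_filter, Finset.mem_insert, Finset.mem_erase, Prod.mk.injEq,
            ne_eq]
          constructor
          · rintro ⟨h, rfl⟩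
            rcases h with ⟨-, rfl⟩ | ⟨-, -, h3⟩
            · exact absurd rfl hwj
            · exact ⟨h3, rfl⟩
          · rintro ⟨h, rfl⟩
            refine ⟨Or.inr ⟨?_, ?_, h⟩, rfl⟩
            · intro hc; exact hwj hc.2.symm
            · intro hc; exact hvj hc.2.symm
        rw [hset]; exact C.indj
      · -- outdeg i = 0
        show (Finset.filter _ _).card = 0
        rw [Finset.card_eq_zero, Finset.eq_empty_iff_forall_notMem]
        rintro ⟨x, y⟩ hxy
        simp only [Finset.mem_filter, Finset.mem_insert, Finset.mem_erase, Prod.mk.injEq,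
          ne_eq] at hxy
        obtain ⟨h, rfl⟩ := hxy
        rcases h with ⟨rfl, -⟩ | ⟨-, -, h3⟩
        · exact hui rfl
        · exact hnoi y h3
      · -- outdeg j = 0
        show (Finset.filter _ _).card = 0
        rw [Finset.card_eq_zero, Finset.eq_empty_iff_forall_notMem]
        rintro ⟨x, y⟩ hxy
        simp only [Finset.mem_filter, Finset.mem_insert, Finset.mem_erase, Prod.mk.injEq,
          ne_eq] at hxy
        obtain ⟨h, rfl⟩ := hxy
        rcases h with ⟨rfl, -⟩ | ⟨-, -, h3⟩
        · exact huj rfl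
        · exact hnoj y h3
      · -- the lifted smoothing step
        refine ⟨u, v, w, ?_, ?_, ?_, ?_, ?_⟩
        · rw [X_indeg_old C hva1 hva2 hvb1 hvb2]; exact hin
        · rw [X_outdeg_old C hva1 hva2 hvb1 hvb2]; exact hout
        · rw [mem_X_arcs]
          exact Or.inl ⟨huv, fun hc => hvi hc.2, fun hc => hvj hc.2⟩
        · rw [mem_X_arcs]
          exact Or.inl ⟨hvw, fun hc => hvp hc.1, fun hc => hvq hc.1⟩
        · simp only [X, Dgraph.mk.injEq]
          constructor
          · ext x
            simp only [Finset.mem_union, Finset.mem_erase, Finset.mem_insert,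
              Finset.mem_singleton, ne_eq]
            constructor
            · rintro (⟨h1, h2⟩ | h)
              · exact ⟨h1, Or.inl h2⟩
              · rcases h with rfl | rfl | rfl | rfl
                · exact ⟨fun hh => hva1 hh.symm, Or.inr (Or.inl rfl)⟩
                · exact ⟨fun hh => hva2 hh.symm, Or.inr (Or.inr (Or.inl rfl))⟩
                · exact ⟨fun hh => hvb1 hh.symm, Or.inr (Or.inr (Or.inr (Or.inl rfl)))⟩
                · exact ⟨fun hh => hvb2 hh.symm, Or.inr (Or.inr (Or.inr (Or.inr rfl)))⟩
            · rintro ⟨h1, h2 | h2⟩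
              · exact Or.inl ⟨h1, h2⟩
              · exact Or.inr h2
          · ext ⟨x, y⟩
            simp only [Finset.mem_union, Finset.mem_sdiff, Finset.mem_insert,
              Finset.mem_erase, Finset.mem_singleton, ne_eq, Prod.mk.injEq, not_or]
            constructor
            · rintro (⟨hm, hn1, hn2⟩ | hg)
              · rcases hm with ⟨rfl, rfl⟩ | ⟨hnw, hnu, hmA⟩
                · exact Or.inl ⟨rfl, rfl⟩
                · exact Or.inr ⟨hnw, hnu, Or.inl ⟨hmA, hn1, hn2⟩⟩
              · refine Or.inr ⟨?_, ?_, Or.inr hg⟩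
                · rintro ⟨rfl, rfl⟩
                  simp_all
                · rintro ⟨rfl, rfl⟩
                  simp_all
            · rintro (⟨rfl, rfl⟩ | ⟨hn1, hn2, hm⟩)
              · exact Or.inl ⟨Or.inl ⟨rfl, rfl⟩, fun hc => hwi hc.2, fun hc => hwj hc.2⟩
              · rcases hm with ⟨hmA, hni, hnq⟩ | hgv
                · exact Or.inl ⟨Or.inr ⟨hn1, hn2, hmA⟩, hni, hnq⟩
                · exact Or.inr hgv

end AuxCross

namespace AuxCross

set_option linter.unusedSectionVars false
set_option maxHeartbeats 1000000

variable {i j a1 a2 b1 b2 p q : ℕ} {G G₁ T T' : Dgraph}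

lemma smooth_lift (C : Ctx i j a1 a2 b1 b2 p q G) (hA : G.Acyclic)
    (h : Relation.ReflTransGen SmoothStep G G₁) :
    ∃ p' q', Ctx i j a1 a2 b1 b2 p' q' G₁ ∧ G₁.Acyclic ∧
      Relation.ReflTransGen SmoothStep (X i j a1 a2 b1 b2 p q G)
        (X i j a1 a2 b1 b2 p' q' G₁) := by
  induction h with
  | refl => exact ⟨p, q, C, hA, Relation.ReflTransGen.refl⟩
  | tail hGH hstep ih =>
    obtain ⟨p', q', C', hA', hsteps⟩ := ih
    obtain ⟨p'', q'', C'', hstep'⟩ := smoothStep_lift C' hA' hstep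
    exact ⟨p'', q'', C'', smoothStep_acyclic hstep hA', hsteps.tail hstep'⟩

lemma smoothed_eq_self {M : Dgraph} (h : ∀ v : ℕ, ¬(G.indeg v = 1 ∧ G.outdeg v = 1))
    (hs : Relation.ReflTransGen SmoothStep G M) : M = G := by
  rcases Relation.ReflTransGen.cases_head hs with h' | ⟨c, hc, -⟩
  · exact h'.symm
  · obtain ⟨u, v, w, hin, hout, -⟩ := hc
    exact absurd ⟨hin, hout⟩ (h v)

lemma indeg_zero_of_not_mem (hwf : G.WellFormed) {v : ℕ} (hv : v ∉ G.verts) :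
    G.indeg v = 0 := by
  unfold Dgraph.indeg
  rw [Finset.card_eq_zero, Finset.eq_empty_iff_forall_notMem]
  intro a ha
  rw [Finset.mem_filter] at ha
  exact hv (ha.2 ▸ (hwf _ ha.1).2)

lemma rbpn_no_one_one {n : ℕ} {N : Dgraph} (h : RBPN n N) :
    ∀ v : ℕ, ¬(N.indeg v = 1 ∧ N.outdeg v = 1) := by
  obtain ⟨hwf, -, hleaf, ρ, hρv, hρin, hρout, hother⟩ := h
  intro v hv
  by_cases hvm : v ∈ N.verts
  · by_cases hvl : v ∈ leafSet n
    · have := ((hleaf v).2 hvl).2.2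
      omega
    · by_cases hvρ : v = ρ
      · subst hvρ; omega
      · rcases hother v hvm hvl hvρ with ⟨-, h2⟩ | ⟨h1, -⟩ <;> omega
  · rw [indeg_zero_of_not_mem hwf hvm] at hv
    omega

lemma rbpn_smoothed {n : ℕ} {N : Dgraph} (h : RBPN n N) : Smoothed N N :=
  ⟨Relation.ReflTransGen.refl, rbpn_no_one_one h⟩

lemma rbpn_leaf {n x : ℕ} {N : Dgraph} (h : RBPN n N) (hx : x ∈ leafSet n) :
    x ∈ N.verts ∧ N.indeg x = 1 ∧ N.outdeg x = 0 :=
  (h.2.2.1 x).2 hx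

/-- Subdivision preserves well-formedness, vertices, and degrees of old vertices. -/
lemma subdivision_facts (h : Subdivision T T') (hwf : T.WellFormed) :
    T'.WellFormed ∧ T.verts ⊆ T'.verts ∧
      ∀ x ∈ T.verts, T'.indeg x = T.indeg x ∧ T'.outdeg x = T.outdeg x := by
  induction h with
  | refl => exact ⟨hwf, Finset.Subset.refl _, fun x _ => ⟨rfl, rfl⟩⟩
  | tail hTM hstep ih =>
    rename_i M M'
    obtain ⟨hwfM, hsub, hdeg⟩ := ih
    obtain ⟨u, v, w, huv, hw, rfl⟩ := hstep
    have huvV := hwfM _ huv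
    have hwu : w ≠ u := fun h => hw (h ▸ huvV.1)
    have hwv : w ≠ v := fun h => hw (h ▸ huvV.2)
    have hnoW1 : ∀ z, (w, z) ∉ M.arcs := fun z hz => hw ((hwfM _ hz).1)
    have hnoW2 : ∀ z, (z, w) ∉ M.arcs := fun z hz => hw ((hwfM _ hz).2)
    refine ⟨?_, ?_, ?_⟩
    · rintro ⟨x, y⟩ hxy
      simp only [Finset.mem_insert, Finset.mem_erase, Prod.mk.injEq, ne_eq] at hxy ⊢
      rcases hxy with ⟨rfl, rfl⟩ | ⟨rfl, rfl⟩ | ⟨-, h3⟩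
      · exact ⟨Or.inr huvV.1, Or.inl rfl⟩
      · exact ⟨Or.inl rfl, Or.inr huvV.2⟩
      · exact ⟨Or.inr (hwfM _ h3).1, Or.inr (hwfM _ h3).2⟩
    · exact hsub.trans (Finset.subset_insert _ _)
    · intro x hx
      have hxw : x ≠ w := fun h => hw (h ▸ hsub hx)
      obtain ⟨hdx, hdy⟩ := hdeg x hx
      constructor
      · rw [← hdx]
        by_cases hxv : x = v
        · subst hxv
          have hm : (u, x) ∈ M.arcs.filter (fun a => a.2 = x) := by
            simp [Finset.mem_filter, huv]
          have hnm : (w, x) ∉ (M.arcs.filter (fun a => a.2 = x)).erase (u, x) := by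
            intro hc
            exact hnoW1 x (Finset.mem_filter.1 (Finset.mem_erase.1 hc).2).1
          have hset : (Finset.filter (fun a => a.2 = x)
              (insert (u, w) (insert (w, x) (M.arcs.erase (u, x))))) =
              insert (w, x) ((M.arcs.filter fun a => a.2 = x).erase (u, x)) := by
            ext ⟨s, t⟩
            simp only [Finset.mem_filter, Finset.mem_insert, Finset.mem_erase,
              Prod.mk.injEq, ne_eq]
            constructor
            · rintro ⟨h', rfl⟩
              rcases h' with ⟨-, h2⟩ | ⟨rfl, -⟩ | ⟨hne, h3⟩
              · exact absurd h2 hxw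
              · exact Or.inl ⟨rfl, rfl⟩
              · exact Or.inr ⟨hne, h3, rfl⟩
            · rintro (⟨rfl, rfl⟩ | ⟨hne, hm2, rfl⟩)
              · exact ⟨Or.inr (Or.inl ⟨rfl, rfl⟩), rfl⟩
              · exact ⟨Or.inr (Or.inr ⟨hne, hm2⟩), rfl⟩
          show (Finset.filter _ _).card = _
          rw [hset, Finset.card_insert_of_notMem hnm, Finset.card_erase_of_mem hm]
          have hpos : 1 ≤ (M.arcs.filter (fun a => a.2 = x)).card :=
            Finset.card_pos.2 ⟨_, hm⟩
          unfold Dgraph.indeg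
          omega
        · have hset : (Finset.filter (fun a => a.2 = x)
              (insert (u, w) (insert (w, v) (M.arcs.erase (u, v))))) =
              M.arcs.filter (fun a => a.2 = x) := by
            ext ⟨s, t⟩
            simp only [Finset.mem_filter, Finset.mem_insert, Finset.mem_erase,
              Prod.mk.injEq, ne_eq]
            constructor
            · rintro ⟨h', rfl⟩
              rcases h' with ⟨-, h2⟩ | ⟨-, h2⟩ | ⟨-, h3⟩
              · exact absurd h2 hxw
              · exact absurd h2 hxv
              · exact ⟨h3, rfl⟩
            · rintro ⟨hm2, rfl⟩
              exact ⟨Or.inr (Or.inr ⟨fun hc => hxv hc.2, hm2⟩), rfl⟩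
          show (Finset.filter _ _).card = _
          rw [hset]
          rfl
      · rw [← hdy]
        by_cases hxu : x = u
        · subst hxu
          have hm : (x, v) ∈ M.arcs.filter (fun a => a.1 = x) := by
            simp [Finset.mem_filter, huv]
          have hnm : (x, w) ∉ (M.arcs.filter (fun a => a.1 = x)).erase (x, v) := by
            intro hc
            exact hnoW2 x (Finset.mem_filter.1 (Finset.mem_erase.1 hc).2).1
          have hset : (Finset.filter (fun a => a.1 = x)
              (insert (x, w) (insert (w, v) (M.arcs.erase (x, v))))) =
              insert (x, w) ((M.arcs.filter fun a => a.1 = x).erase (x, v)) := by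
            ext ⟨s, t⟩
            simp only [Finset.mem_filter, Finset.mem_insert, Finset.mem_erase,
              Prod.mk.injEq, ne_eq]
            constructor
            · rintro ⟨h', rfl⟩
              rcases h' with ⟨-, rfl⟩ | ⟨h2, -⟩ | ⟨hne, h3⟩
              · exact Or.inl ⟨rfl, rfl⟩
              · exact absurd h2 hxw
              · exact Or.inr ⟨hne, h3, rfl⟩
            · rintro (⟨rfl, rfl⟩ | ⟨hne, hm2, rfl⟩)
              · exact ⟨Or.inl ⟨rfl, rfl⟩, rfl⟩
              · exact ⟨Or.inr (Or.inr ⟨hne, hm2⟩), rfl⟩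
          show (Finset.filter _ _).card = _
          rw [hset, Finset.card_insert_of_notMem hnm, Finset.card_erase_of_mem hm]
          have hpos : 1 ≤ (M.arcs.filter (fun a => a.1 = x)).card :=
            Finset.card_pos.2 ⟨_, hm⟩
          unfold Dgraph.outdeg
          omega
        · have hset : (Finset.filter (fun a => a.1 = x)
              (insert (u, w) (insert (w, v) (M.arcs.erase (u, v))))) =
              M.arcs.filter (fun a => a.1 = x) := by
            ext ⟨s, t⟩
            simp only [Finset.mem_filter, Finset.mem_insert, Finset.mem_erase,
              Prod.mk.injEq, ne_eq]
            constructor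
            · rintro ⟨h', rfl⟩
              rcases h' with ⟨h2, -⟩ | ⟨h2, -⟩ | ⟨-, h3⟩
              · exact absurd h2 hxu
              · exact absurd h2 hxw
              · exact ⟨h3, rfl⟩
            · rintro ⟨hm2, rfl⟩
              exact ⟨Or.inr (Or.inr ⟨fun hc => hxu hc.1, hm2⟩), rfl⟩
          show (Finset.filter _ _).card = _
          rw [hset]
          rfl

end AuxCross

namespace AuxCross

set_option linter.unusedSectionVars false
set_option maxHeartbeats 1000000

variable {n : ℕ} {G T T' : Dgraph} {σ : Equiv.Perm ℕ}

lemma relabel_comp (f g : ℕ → ℕ) (G : Dgraph) :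
    relabel f (relabel g G) = relabel (fun x => f (g x)) G := by
  simp only [relabel, Finset.image_image]
  rfl

lemma relabel_one (G : Dgraph) : relabel (fun x => x) G = G := by
  unfold relabel
  congr 1
  · exact Finset.image_id'
  · exact Finset.image_id'

lemma relabel_verts_mem {x : ℕ} : x ∈ (relabel σ G).verts ↔ σ.symm x ∈ G.verts := by
  simp only [relabel, Finset.mem_image]
  constructor
  · rintro ⟨y, hy, rfl⟩
    simpa using hy
  · intro h
    exact ⟨σ.symm x, h, by simp⟩

lemma relabel_arcs_mem {x y : ℕ} :
    (x, y) ∈ (relabel σ G).arcs ↔ (σ.symm x, σ.symm y) ∈ G.arcs := by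
  simp only [relabel, Finset.mem_image]
  constructor
  · rintro ⟨⟨s, t⟩, hst, heq⟩
    rw [Prod.mk.injEq] at heq
    obtain ⟨rfl, rfl⟩ := heq
    simpa using hst
  · intro h
    exact ⟨(σ.symm x, σ.symm y), h, by simp⟩

lemma relabel_wf (h : G.WellFormed) : (relabel σ G).WellFormed := by
  rintro ⟨x, y⟩ hxy
  rw [relabel_arcs_mem] at hxy
  exact ⟨relabel_verts_mem.2 (h _ hxy).1, relabel_verts_mem.2 (h _ hxy).2⟩

lemma relabel_acyclic (h : G.Acyclic) : (relabel σ G).Acyclic := by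
  have hpath : ∀ x y : ℕ, Relation.ReflTransGen (relabel σ G).ArcRel x y →
      Relation.ReflTransGen G.ArcRel (σ.symm x) (σ.symm y) := by
    intro x y hxy
    induction hxy with
    | refl => exact Relation.ReflTransGen.refl
    | tail _ harc ih =>
      exact ih.tail (relabel_arcs_mem.1 harc)
  intro x y hxy hcyc
  exact h (σ.symm x) (σ.symm y) (relabel_arcs_mem.1 hxy) (hpath _ _ hcyc)

lemma pairmap_inj : Function.Injective (fun a : ℕ × ℕ => (σ a.1, σ a.2)) := by
  rintro ⟨s, t⟩ ⟨s', t'⟩ h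
  rw [Prod.mk.injEq] at h ⊢
  exact ⟨σ.injective h.1, σ.injective h.2⟩

lemma relabel_indeg (w : ℕ) : (relabel σ G).indeg w = G.indeg (σ.symm w) := by
  unfold Dgraph.indeg
  have hset : (relabel σ G).arcs.filter (fun a => a.2 = w) =
      (G.arcs.filter (fun a => a.2 = σ.symm w)).image (fun a => (σ a.1, σ a.2)) := by
    ext ⟨x, y⟩
    simp only [Finset.mem_filter, Finset.mem_image, relabel, Prod.mk.injEq]
    constructor
    · rintro ⟨⟨⟨s, t⟩, hst, hs, ht⟩, rfl⟩
      exact ⟨(s, t), ⟨hst, by rw [← ht]; simp⟩, hs, ht⟩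
    · rintro ⟨⟨s, t⟩, ⟨hst, rfl⟩, hs, ht⟩
      exact ⟨⟨(s, σ.symm w), hst, hs, ht⟩, by rw [← ht]; simp⟩
  rw [hset, Finset.card_image_of_injective _ pairmap_inj]

lemma relabel_outdeg (w : ℕ) : (relabel σ G).outdeg w = G.outdeg (σ.symm w) := by
  unfold Dgraph.outdeg
  have hset : (relabel σ G).arcs.filter (fun a => a.1 = w) =
      (G.arcs.filter (fun a => a.1 = σ.symm w)).image (fun a => (σ a.1, σ a.2)) := by
    ext ⟨x, y⟩
    simp only [Finset.mem_filter, Finset.mem_image, relabel, Prod.mk.injEq]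
    constructor
    · rintro ⟨⟨⟨s, t⟩, hst, hs, ht⟩, rfl⟩
      exact ⟨(s, t), ⟨hst, by rw [← hs]; simp⟩, hs, ht⟩
    · rintro ⟨⟨s, t⟩, ⟨hst, rfl⟩, hs, ht⟩
      exact ⟨⟨(σ.symm w, t), hst, hs, ht⟩, by rw [← hs]; simp⟩
  rw [hset, Finset.card_image_of_injective _ pairmap_inj]

section Fix

variable (hfix : ∀ x : ℕ, x ∉ leafSet n → σ x = x)
include hfix

lemma perm_mem_leafSet {x : ℕ} : σ x ∈ leafSet n ↔ x ∈ leafSet n := by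
  constructor
  · intro h
    by_contra hx
    rw [hfix x hx] at h
    exact hx h
  · intro h
    by_contra hx
    have := hfix (σ x) hx
    have := σ.injective this
    rw [← this] at h
    exact hx h

lemma perm_symm_fix : ∀ x : ℕ, x ∉ leafSet n → σ.symm x = x := by
  intro x hx
  have : σ (σ.symm x) = σ x := by
    rw [Equiv.apply_symm_apply, hfix x hx]
  exact σ.injective this

lemma perm_symm_mem_leafSet {x : ℕ} : σ.symm x ∈ leafSet n ↔ x ∈ leafSet n := by
  have h := perm_mem_leafSet (σ := σ) hfix (x := σ.symm x)
  rw [Equiv.apply_symm_apply] at h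
  exact h.symm

lemma relabel_verts_eq (hT : leafSet n ⊆ T.verts) : (relabel σ T).verts = T.verts := by
  ext x
  rw [relabel_verts_mem]
  constructor
  · intro h
    by_cases hx : x ∈ leafSet n
    · exact hT hx
    · rw [perm_symm_fix hfix x hx] at h
      exact h
  · intro h
    by_cases hx : x ∈ leafSet n
    · exact hT ((perm_symm_mem_leafSet hfix).2 hx)
    · rw [perm_symm_fix hfix x hx]
      exact h

lemma relabel_rbpt (hT : RBPT n T) : RBPT n (relabel σ T) := by
  obtain ⟨⟨hwf, hacy, hleaf, ρ, hρv, hρin, hρout, hother⟩, hno2⟩ := hT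
  refine ⟨⟨relabel_wf hwf, relabel_acyclic hacy, ?_, σ ρ, ?_, ?_, ?_, ?_⟩, ?_⟩
  · intro v
    unfold Dgraph.IsLeaf
    rw [relabel_verts_mem, relabel_indeg, relabel_outdeg]
    constructor
    · rintro ⟨h1, h2, h3⟩
      exact (perm_symm_mem_leafSet hfix).1 ((hleaf (σ.symm v)).1 ⟨h1, h2, h3⟩)
    · intro hv
      have := (hleaf (σ.symm v)).2 ((perm_symm_mem_leafSet hfix).2 hv)
      exact ⟨this.1, this.2.1, this.2.2⟩
  · rw [relabel_verts_mem]
    simpa using hρv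
  · rw [relabel_indeg]
    simpa using hρin
  · rw [relabel_outdeg]
    simpa using hρout
  · intro v hv hvl hvρ
    rw [relabel_verts_mem] at hv
    rw [relabel_indeg, relabel_outdeg]
    refine hother (σ.symm v) hv ?_ ?_
    · exact fun hc => hvl ((perm_symm_mem_leafSet hfix).1 hc)
    · intro hc
      exact hvρ (by rw [← hc]; simp)
  · intro v
    rw [relabel_indeg]
    exact hno2 (σ.symm v)

end Fix

end AuxCross

namespace AuxCross

set_option linter.unusedSectionVars false
set_option maxHeartbeats 1600000

variable {n : ℕ} {G G' N T : Dgraph} {σ : Equiv.Perm ℕ}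

lemma subdivStep_relabel (σ : Equiv.Perm ℕ) (h : SubdivStep G G') :
    SubdivStep (relabel σ G) (relabel σ G') := by
  obtain ⟨u, v, w, huv, hw, rfl⟩ := h
  refine ⟨σ u, σ v, σ w, ?_, ?_, ?_⟩
  · rw [relabel_arcs_mem]; simpa using huv
  · rw [relabel_verts_mem]; simpa using hw
  · unfold relabel
    congr 1
    · rw [Finset.image_insert]
    · show Finset.image (fun a : ℕ × ℕ => (σ a.1, σ a.2)) _ = _
      rw [Finset.image_insert, Finset.image_insert,
        Finset.image_erase (pairmap_inj (σ := σ))]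

lemma subdivision_relabel (σ : Equiv.Perm ℕ) {T T' : Dgraph} (h : Subdivision T T') :
    Subdivision (relabel σ T) (relabel σ T') := by
  induction h with
  | refl => exact Relation.ReflTransGen.refl
  | tail _ hstep ih => exact ih.tail (subdivStep_relabel σ hstep)

/-- Extending an isomorphism through the crossover construction. -/
lemma iso_X {i j a1 a2 b1 b2 p q c1 c2 d1 d2 u v : ℕ} {f : ℕ → ℕ}
    (Cg : Ctx i j a1 a2 b1 b2 p q G) (Cn : Ctx i j c1 c2 d1 d2 u v N)
    (hiso : IsIsoOn f G N) (hfp : f p = u) (hfq : f q = v) (hfi : f i = i) (hfj : f j = j) :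
    IsIsoOn (fun x => if x = a1 then c1 else if x = a2 then c2 else if x = b1 then d1
      else if x = b2 then d2 else f x) (X i j a1 a2 b1 b2 p q G) (X i j c1 c2 d1 d2 u v N) := by
  set f' : ℕ → ℕ := fun x => if x = a1 then c1 else if x = a2 then c2 else if x = b1 then d1
      else if x = b2 then d2 else f x with hf'
  have hold : ∀ x, x ∈ G.verts → f' x = f x := by
    intro x hx
    have h1 : x ≠ a1 := fun h => Cg.fa1 (h ▸ hx)
    have h2 : x ≠ a2 := fun h => Cg.fa2 (h ▸ hx)
    have h3 : x ≠ b1 := fun h => Cg.fb1 (h ▸ hx)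
    have h4 : x ≠ b2 := fun h => Cg.fb2 (h ▸ hx)
    simp [hf', h1, h2, h3, h4]
  have hv1 : f' a1 = c1 := by simp [hf']
  have hv2 : f' a2 = c2 := by simp [hf', Ne.symm Cg.d12]
  have hv3 : f' b1 = d1 := by simp [hf', Ne.symm Cg.d13, Ne.symm Cg.d23]
  have hv4 : f' b2 = d2 := by simp [hf', Ne.symm Cg.d14, Ne.symm Cg.d24, Ne.symm Cg.d34]
  have hmapsto := hiso.1.1
  have hinjOn := hiso.1.2.1
  have hsurjOn := hiso.1.2.2
  have hfmem : ∀ x, x ∈ G.verts → f x ∈ N.verts := fun x hx => hmapsto hx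
  -- inversion lemmas
  have hclass : ∀ x : ℕ, x ∈ (X i j a1 a2 b1 b2 p q G).verts →
      x ∈ G.verts ∨ x = a1 ∨ x = a2 ∨ x = b1 ∨ x = b2 := fun x hx => mem_X_verts.1 hx
  have hinv_old : ∀ z x, z ∈ N.verts → x ∈ G.verts ∨ x = a1 ∨ x = a2 ∨ x = b1 ∨ x = b2 →
      f' x = z → x ∈ G.verts ∧ f x = z := by
    intro z x hz hx hfx
    rcases hx with h | rfl | rfl | rfl | rfl
    · exact ⟨h, (hold x h) ▸ hfx⟩
    · exact absurd (hv1 ▸ hfx ▸ hz) Cn.fa1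
    · exact absurd (hv2 ▸ hfx ▸ hz) Cn.fa2
    · exact absurd (hv3 ▸ hfx ▸ hz) Cn.fb1
    · exact absurd (hv4 ▸ hfx ▸ hz) Cn.fb2
  have hinv_u : ∀ x, x ∈ G.verts ∨ x = a1 ∨ x = a2 ∨ x = b1 ∨ x = b2 → f' x = u → x = p := by
    intro x hx hfx
    obtain ⟨hxm, hfx'⟩ := hinv_old u x Cn.hpv hx hfx
    exact hinjOn hxm Cg.hpv (hfx'.trans hfp.symm)
  have hinv_v : ∀ x, x ∈ G.verts ∨ x = a1 ∨ x = a2 ∨ x = b1 ∨ x = b2 → f' x = v → x = q := by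
    intro x hx hfx
    obtain ⟨hxm, hfx'⟩ := hinv_old v x Cn.hqv hx hfx
    exact hinjOn hxm Cg.hqv (hfx'.trans hfq.symm)
  have hinv_i : ∀ x, x ∈ G.verts ∨ x = a1 ∨ x = a2 ∨ x = b1 ∨ x = b2 → f' x = i → x = i := by
    intro x hx hfx
    obtain ⟨hxm, hfx'⟩ := hinv_old i x Cn.hiv hx hfx
    exact hinjOn hxm Cg.hiv (hfx'.trans hfi.symm)
  have hinv_j : ∀ x, x ∈ G.verts ∨ x = a1 ∨ x = a2 ∨ x = b1 ∨ x = b2 → f' x = j → x = j := by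
    intro x hx hfx
    obtain ⟨hxm, hfx'⟩ := hinv_old j x Cn.hjv hx hfx
    exact hinjOn hxm Cg.hjv (hfx'.trans hfj.symm)
  have hinv_c1 : ∀ x, x ∈ G.verts ∨ x = a1 ∨ x = a2 ∨ x = b1 ∨ x = b2 → f' x = c1 → x = a1 := by
    intro x hx hfx
    rcases hx with h | rfl | rfl | rfl | rfl
    · exact absurd (hfx ▸ (hold x h).symm ▸ hfmem x h) Cn.fa1
    · rfl
    · exact absurd (hv2 ▸ hfx) (Ne.symm Cn.d12)
    · exact absurd (hv3 ▸ hfx) (Ne.symm Cn.d13)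
    · exact absurd (hv4 ▸ hfx) (Ne.symm Cn.d14)
  have hinv_c2 : ∀ x, x ∈ G.verts ∨ x = a1 ∨ x = a2 ∨ x = b1 ∨ x = b2 → f' x = c2 → x = a2 := by
    intro x hx hfx
    rcases hx with h | rfl | rfl | rfl | rfl
    · exact absurd (hfx ▸ (hold x h).symm ▸ hfmem x h) Cn.fa2
    · exact absurd (hv1 ▸ hfx) Cn.d12
    · rfl
    · exact absurd (hv3 ▸ hfx) (Ne.symm Cn.d23)
    · exact absurd (hv4 ▸ hfx) (Ne.symm Cn.d24)
  have hinv_d1 : ∀ x, x ∈ G.verts ∨ x = a1 ∨ x = a2 ∨ x = b1 ∨ x = b2 → f' x = d1 → x = b1 := by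
    intro x hx hfx
    rcases hx with h | rfl | rfl | rfl | rfl
    · exact absurd (hfx ▸ (hold x h).symm ▸ hfmem x h) Cn.fb1
    · exact absurd (hv1 ▸ hfx) Cn.d13
    · exact absurd (hv2 ▸ hfx) Cn.d23
    · rfl
    · exact absurd (hv4 ▸ hfx) (Ne.symm Cn.d34)
  have hinv_d2 : ∀ x, x ∈ G.verts ∨ x = a1 ∨ x = a2 ∨ x = b1 ∨ x = b2 → f' x = d2 → x = b2 := by
    intro x hx hfx
    rcases hx with h | rfl | rfl | rfl | rfl
    · exact absurd (hfx ▸ (hold x h).symm ▸ hfmem x h) Cn.fb2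
    · exact absurd (hv1 ▸ hfx) Cn.d14
    · exact absurd (hv2 ▸ hfx) Cn.d24
    · exact absurd (hv3 ▸ hfx) Cn.d34
    · rfl
  constructor
  · -- bijOn
    refine ⟨?_, ?_, ?_⟩
    · -- maps to
      intro x hx
      rcases hclass x (Finset.mem_coe.1 hx) with h | rfl | rfl | rfl | rfl
      · exact Finset.mem_coe.2 (mem_X_verts.2 (Or.inl (by rw [hold x h]; exact hfmem x h)))
      · exact Finset.mem_coe.2 (mem_X_verts.2 (by rw [hv1]; exact Or.inr (Or.inl rfl)))
      · exact Finset.mem_coe.2 (mem_X_verts.2 (by rw [hv2]; exact Or.inr (Or.inr (Or.inl rfl))))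
      · exact Finset.mem_coe.2 (mem_X_verts.2 (by rw [hv3]; exact Or.inr (Or.inr (Or.inr (Or.inl rfl)))))
      · exact Finset.mem_coe.2 (mem_X_verts.2 (by rw [hv4]; exact Or.inr (Or.inr (Or.inr (Or.inr rfl)))))
    · -- injOn
      intro x hx y hy hxy
      have hx' := hclass x (Finset.mem_coe.1 hx)
      have hy' := hclass y (Finset.mem_coe.1 hy)
      rcases hx' with h | rfl | rfl | rfl | rfl
      · obtain ⟨hym, hfy⟩ := hinv_old (f x) y (hfmem x h) hy' ((hold x h ▸ hxy).symm)
        exact (hinjOn hym h hfy).symm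
      · exact (hinv_c1 y hy' (hv1 ▸ hxy).symm).symm
      · exact (hinv_c2 y hy' (hv2 ▸ hxy).symm).symm
      · exact (hinv_d1 y hy' (hv3 ▸ hxy).symm).symm
      · exact (hinv_d2 y hy' (hv4 ▸ hxy).symm).symm
    · -- surjOn
      intro z hz
      rcases mem_X_verts.1 (Finset.mem_coe.1 hz) with h | rfl | rfl | rfl | rfl
      · obtain ⟨x, hx, hfx⟩ := hsurjOn (Finset.mem_coe.2 h)
        exact ⟨x, Finset.mem_coe.2 (mem_X_verts.2 (Or.inl (Finset.mem_coe.1 hx))),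
          by rw [hold x (Finset.mem_coe.1 hx)]; exact hfx⟩
      · exact ⟨a1, Finset.mem_coe.2 (mem_X_verts.2 (Or.inr (Or.inl rfl))), hv1⟩
      · exact ⟨a2, Finset.mem_coe.2 (mem_X_verts.2 (Or.inr (Or.inr (Or.inl rfl)))), hv2⟩
      · exact ⟨b1, Finset.mem_coe.2 (mem_X_verts.2 (Or.inr (Or.inr (Or.inr (Or.inl rfl))))), hv3⟩
      · exact ⟨b2, Finset.mem_coe.2 (mem_X_verts.2 (Or.inr (Or.inr (Or.inr (Or.inr rfl))))), hv4⟩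
  · -- arcs
    intro x hx y hy
    have hx' := hclass x hx
    have hy' := hclass y hy
    rw [mem_X_arcs, mem_X_arcs]
    constructor
    · rintro (⟨hm, hn1, hn2⟩ | hg)
      · have hxm := (Cg.wf _ hm).1
        have hym := (Cg.wf _ hm).2
        rw [hold x hxm, hold y hym]
        refine Or.inl ⟨(hiso.2 x hxm y hym).1 hm, ?_, ?_⟩
        · rintro ⟨h1, h2⟩
          exact hn1 ⟨hinjOn hxm Cg.hpv (h1.trans hfp.symm),
            hinjOn hym Cg.hiv (h2.trans hfi.symm)⟩
        · rintro ⟨h1, h2⟩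
          exact hn2 ⟨hinjOn hxm Cg.hqv (h1.trans hfq.symm),
            hinjOn hym Cg.hjv (h2.trans hfj.symm)⟩
      · rcases hg with ⟨rfl, rfl⟩ | ⟨rfl, rfl⟩ | ⟨rfl, rfl⟩ | ⟨rfl, rfl⟩ | ⟨rfl, rfl⟩ |
          ⟨rfl, rfl⟩ | ⟨rfl, rfl⟩ | ⟨rfl, rfl⟩
        · exact Or.inr (Or.inl ⟨(hold x Cg.hpv).trans hfp, hv1⟩)
        · exact Or.inr (Or.inr (Or.inl ⟨hv1, hv2⟩))
        · exact Or.inr (Or.inr (Or.inr (Or.inl ⟨hv2, (hold y Cg.hiv).trans hfi⟩)))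
        · exact Or.inr (Or.inr (Or.inr (Or.inr (Or.inl
            ⟨(hold x Cg.hqv).trans hfq, hv3⟩))))
        · exact Or.inr (Or.inr (Or.inr (Or.inr (Or.inr (Or.inl ⟨hv3, hv4⟩)))))
        · exact Or.inr (Or.inr (Or.inr (Or.inr (Or.inr (Or.inr (Or.inl
            ⟨hv4, (hold y Cg.hjv).trans hfj⟩))))))
        · exact Or.inr (Or.inr (Or.inr (Or.inr (Or.inr (Or.inr (Or.inr (Or.inl
            ⟨hv1, hv4⟩)))))))
        · exact Or.inr (Or.inr (Or.inr (Or.inr (Or.inr (Or.inr (Or.inr (Or.inr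
            ⟨hv3, hv2⟩)))))))
    · rintro (⟨hm, hn1, hn2⟩ | hg)
      · have hxm : x ∈ G.verts ∧ f x = f' x := by
          have := hinv_old (f' x) x (Cn.wf _ hm).1 hx' rfl
          exact ⟨this.1, this.2.symm ▸ rfl⟩
        have hym : y ∈ G.verts ∧ f y = f' y := by
          have := hinv_old (f' y) y (Cn.wf _ hm).2 hy' rfl
          exact ⟨this.1, this.2.symm ▸ rfl⟩
        obtain ⟨hxv, hfx⟩ := hxm
        obtain ⟨hyv, hfy⟩ := hym
        rw [← hfx, ← hfy] at hm
        refine Or.inl ⟨(hiso.2 x hxv y hyv).2 hm, ?_, ?_⟩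
        · rintro ⟨rfl, rfl⟩
          exact hn1 ⟨(hold x hxv).trans hfp, (hold y hyv).trans hfi⟩
        · rintro ⟨rfl, rfl⟩
          exact hn2 ⟨(hold x hxv).trans hfq, (hold y hyv).trans hfj⟩
      · rcases hg with ⟨h1, h2⟩ | ⟨h1, h2⟩ | ⟨h1, h2⟩ | ⟨h1, h2⟩ | ⟨h1, h2⟩ |
          ⟨h1, h2⟩ | ⟨h1, h2⟩ | ⟨h1, h2⟩
        · obtain rfl := hinv_u x hx' h1
          obtain rfl := hinv_c1 y hy' h2
          exact Or.inr (Or.inl ⟨rfl, rfl⟩)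
        · obtain rfl := hinv_c1 x hx' h1
          obtain rfl := hinv_c2 y hy' h2
          exact Or.inr (Or.inr (Or.inl ⟨rfl, rfl⟩))
        · obtain rfl := hinv_c2 x hx' h1
          obtain rfl := hinv_i y hy' h2
          exact Or.inr (Or.inr (Or.inr (Or.inl ⟨rfl, rfl⟩)))
        · obtain rfl := hinv_v x hx' h1
          obtain rfl := hinv_d1 y hy' h2
          exact Or.inr (Or.inr (Or.inr (Or.inr (Or.inl ⟨rfl, rfl⟩))))
        · obtain rfl := hinv_d1 x hx' h1
          obtain rfl := hinv_d2 y hy' h2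
          exact Or.inr (Or.inr (Or.inr (Or.inr (Or.inr (Or.inl ⟨rfl, rfl⟩)))))
        · obtain rfl := hinv_d2 x hx' h1
          obtain rfl := hinv_j y hy' h2
          exact Or.inr (Or.inr (Or.inr (Or.inr (Or.inr (Or.inr (Or.inl ⟨rfl, rfl⟩))))))
        · obtain rfl := hinv_c1 x hx' h1
          obtain rfl := hinv_d2 y hy' h2
          exact Or.inr (Or.inr (Or.inr (Or.inr (Or.inr (Or.inr (Or.inr (Or.inl ⟨rfl, rfl⟩)))))))
        · obtain rfl := hinv_d1 x hx' h1
          obtain rfl := hinv_c2 y hy' h2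
          exact Or.inr (Or.inr (Or.inr (Or.inr (Or.inr (Or.inr (Or.inr (Or.inr ⟨rfl, rfl⟩)))))))

end AuxCross

namespace AuxCross

set_option linter.unusedSectionVars false
set_option maxHeartbeats 1600000

variable {n i j a1 a2 b1 b2 u v : ℕ} {N : Dgraph}

lemma leafSet_subset_verts (hN : RBPN n N) : leafSet n ⊆ N.verts :=
  fun x hx => ((hN.2.2.1 x).2 hx).1

lemma X_rbpn (C : Ctx i j a1 a2 b1 b2 u v N) (hN : RBPN n N) :
    RBPN n (X i j a1 a2 b1 b2 u v N) := by
  obtain ⟨hwf, hacy, hleaf, ρ, hρv, hρin, hρout, hother⟩ := hN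
  have hsub : leafSet n ⊆ N.verts := fun x hx => ((hleaf x).2 hx).1
  have hnew : ∀ w : ℕ, (w = a1 ∨ w = a2 ∨ w = b1 ∨ w = b2) → w ∉ leafSet n := by
    rintro w (rfl | rfl | rfl | rfl) hw
    · exact C.fa1 (hsub hw)
    · exact C.fa2 (hsub hw)
    · exact C.fb1 (hsub hw)
    · exact C.fb2 (hsub hw)
  refine ⟨X_wf C, X_acyclic C hacy, ?_, ρ, ?_, ?_, ?_, ?_⟩
  · intro w
    unfold Dgraph.IsLeaf
    by_cases h1 : w = a1
    · subst h1
      rw [X_outdeg_a1 C]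
      constructor
      · rintro ⟨-, -, h'⟩
        exact absurd h' (by omega)
      · intro hc
        exact absurd hc (hnew _ (Or.inl rfl))
    by_cases h2 : w = a2
    · subst h2
      rw [X_indeg_a2 C]
      constructor
      · rintro ⟨-, h', -⟩
        exact absurd h' (by omega)
      · intro hc
        exact absurd hc (hnew _ (Or.inr (Or.inl rfl)))
    by_cases h3 : w = b1
    · subst h3
      rw [X_outdeg_b1 C]
      constructor
      · rintro ⟨-, -, h'⟩
        exact absurd h' (by omega)
      · intro hc
        exact absurd hc (hnew _ (Or.inr (Or.inr (Or.inl rfl))))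
    by_cases h4 : w = b2
    · subst h4
      rw [X_indeg_b2 C]
      constructor
      · rintro ⟨-, h', -⟩
        exact absurd h' (by omega)
      · intro hc
        exact absurd hc (hnew _ (Or.inr (Or.inr (Or.inr rfl))))
    rw [X_indeg_old C h1 h2 h3 h4, X_outdeg_old C h1 h2 h3 h4]
    constructor
    · rintro ⟨hm, hd1, hd2⟩
      rcases mem_X_verts.1 hm with hm' | rfl | rfl | rfl | rfl
      · exact (hleaf w).1 ⟨hm', hd1, hd2⟩
      · exact absurd rfl h1
      · exact absurd rfl h2
      · exact absurd rfl h3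
      · exact absurd rfl h4
    · intro hw
      have := (hleaf w).2 hw
      exact ⟨mem_X_verts.2 (Or.inl this.1), this.2.1, this.2.2⟩
  · exact mem_X_verts.2 (Or.inl hρv)
  · have h1 : ρ ≠ a1 := fun h => C.fa1 (h ▸ hρv)
    have h2 : ρ ≠ a2 := fun h => C.fa2 (h ▸ hρv)
    have h3 : ρ ≠ b1 := fun h => C.fb1 (h ▸ hρv)
    have h4 : ρ ≠ b2 := fun h => C.fb2 (h ▸ hρv)
    rw [X_indeg_old C h1 h2 h3 h4]
    exact hρin
  · have h1 : ρ ≠ a1 := fun h => C.fa1 (h ▸ hρv)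
    have h2 : ρ ≠ a2 := fun h => C.fa2 (h ▸ hρv)
    have h3 : ρ ≠ b1 := fun h => C.fb1 (h ▸ hρv)
    have h4 : ρ ≠ b2 := fun h => C.fb2 (h ▸ hρv)
    rw [X_outdeg_old C h1 h2 h3 h4]
    exact hρout
  · intro w hw hwl hwρ
    rcases mem_X_verts.1 hw with hm' | rfl | rfl | rfl | rfl
    · have h1 : w ≠ a1 := fun h => C.fa1 (h ▸ hm')
      have h2 : w ≠ a2 := fun h => C.fa2 (h ▸ hm')
      have h3 : w ≠ b1 := fun h => C.fb1 (h ▸ hm')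
      have h4 : w ≠ b2 := fun h => C.fb2 (h ▸ hm')
      rw [X_indeg_old C h1 h2 h3 h4, X_outdeg_old C h1 h2 h3 h4]
      exact hother w hm' hwl hwρ
    · exact Or.inl ⟨X_indeg_a1 C, X_outdeg_a1 C⟩
    · exact Or.inr ⟨X_indeg_a2 C, X_outdeg_a2 C⟩
    · exact Or.inl ⟨X_indeg_b1 C, X_outdeg_b1 C⟩
    · exact Or.inr ⟨X_indeg_b2 C, X_outdeg_b2 C⟩

end AuxCross

namespace AuxCross

set_option linter.unusedSectionVars false
set_option maxHeartbeats 1600000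

lemma crossover_step {n i j : ℕ} {N N' : Dgraph} (hN : RBPN n N) (hij : i ≠ j)
    (hi : i ∈ leafSet n) (hj : j ∈ leafSet n) (hcr : CrossoverAt N i j N') :
    RBPN n N' ∧ ∀ T : Dgraph, RBPT n T → IsBaseTree n N T →
      IsBaseTree n N' (relabel (Equiv.swap i j) T) := by
  obtain ⟨u, v, c1, c2, d1, d2, hui, hvj, hc1, hc2, hd1, hd2, hnodup, rfl⟩ := hcr
  simp only [List.nodup_cons, List.mem_cons, List.mem_singleton, List.not_mem_nil,
    or_false, not_or, List.nodup_nil, and_true] at hnodup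
  obtain ⟨⟨e12, e13, e14⟩, ⟨e23, e24⟩, e34, -⟩ := hnodup
  obtain ⟨hivm, hii, hio⟩ := rbpn_leaf hN hi
  obtain ⟨hjvm, hji, hjo⟩ := rbpn_leaf hN hj
  have Cn : Ctx i j c1 c2 d1 d2 u v N :=
    ⟨hN.1, hij, hc1, hc2, hd1, hd2, e12, e13, e14, e23, e24, e34, hui, hvj, hii, hji, hio, hjo⟩
  constructor
  · exact X_rbpn Cn hN
  intro T hT hBase
  obtain ⟨T', hsubT, I, hI, hdisj, hacyc, hhom⟩ := hBase
  obtain ⟨G₁, N₁, hsmG, hsmN, f, hfiso, hffix⟩ := hhom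
  have hN₁ : N₁ = N := smoothed_eq_self (rbpn_no_one_one hN) hsmN.1
  rw [hN₁] at hfiso
  -- facts about T and T'
  have hTwf : T.WellFormed := hT.1.1
  obtain ⟨hT'wf, hTsub, hdegs⟩ := subdivision_facts hsubT hTwf
  obtain ⟨hiT, hiT1, hiT0⟩ := rbpn_leaf hT.1 hi
  obtain ⟨hjT, hjT1, hjT0⟩ := rbpn_leaf hT.1 hj
  have hiT' : i ∈ T'.verts := hTsub hiT
  have hjT' : j ∈ T'.verts := hTsub hjT
  obtain ⟨hiT'1, hiT'0⟩ := hdegs i hiT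
  obtain ⟨hjT'1, hjT'0⟩ := hdegs j hjT
  rw [hiT1] at hiT'1
  rw [hiT0] at hiT'0
  rw [hjT1] at hjT'1
  rw [hjT0] at hjT'0
  -- the combined graph
  set G : Dgraph := ⟨T'.verts, T'.arcs ∪ I⟩ with hGdef
  have hGv : G.verts = T'.verts := rfl
  have hGa : G.arcs = T'.arcs ∪ I := rfl
  have hGwf : G.WellFormed := by
    rintro ⟨x, y⟩ hxy
    rcases Finset.mem_union.1 hxy with h | h
    · exact ⟨(hT'wf _ h).1, (hT'wf _ h).2⟩
    · exact ⟨(hI _ h).1, (hI _ h).2.2.1⟩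
  have hIi : ∀ x, (x, i) ∉ I := fun x hx => (hI _ hx).2.2.2 hiT
  have hIj : ∀ x, (x, j) ∉ I := fun x hx => (hI _ hx).2.2.2 hjT
  have hIi' : ∀ x, (i, x) ∉ I := fun x hx => (hI _ hx).2.1 hiT
  have hIj' : ∀ x, (j, x) ∉ I := fun x hx => (hI _ hx).2.1 hjT
  have hGii : G.indeg i = 1 := by
    show (Finset.filter _ (T'.arcs ∪ I)).card = 1
    rw [Finset.filter_union]
    have hIe : Finset.filter (fun a => a.2 = i) I = ∅ := by
      rw [Finset.eq_empty_iff_forall_notMem]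
      rintro ⟨x, y⟩ hxy
      rw [Finset.mem_filter] at hxy
      exact hIi x (by rw [← hxy.2]; exact hxy.1)
    rw [hIe, Finset.union_empty]
    exact hiT'1
  have hGji : G.indeg j = 1 := by
    show (Finset.filter _ (T'.arcs ∪ I)).card = 1
    rw [Finset.filter_union]
    have hIe : Finset.filter (fun a => a.2 = j) I = ∅ := by
      rw [Finset.eq_empty_iff_forall_notMem]
      rintro ⟨x, y⟩ hxy
      rw [Finset.mem_filter] at hxy
      exact hIj x (by rw [← hxy.2]; exact hxy.1)
    rw [hIe, Finset.union_empty]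
    exact hjT'1
  have hGio : G.outdeg i = 0 := by
    show (Finset.filter _ (T'.arcs ∪ I)).card = 0
    rw [Finset.card_eq_zero, Finset.eq_empty_iff_forall_notMem]
    rintro ⟨x, y⟩ hxy
    rw [Finset.mem_filter, Finset.mem_union] at hxy
    obtain ⟨hm, hx2⟩ := hxy
    rw [show x = i from hx2] at hm
    rcases hm with h | h
    · exact outdeg_zero_not_mem hiT'0 h
    · exact hIi' y h
  have hGjo : G.outdeg j = 0 := by
    show (Finset.filter _ (T'.arcs ∪ I)).card = 0
    rw [Finset.card_eq_zero, Finset.eq_empty_iff_forall_notMem]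
    rintro ⟨x, y⟩ hxy
    rw [Finset.mem_filter, Finset.mem_union] at hxy
    obtain ⟨hm, hx2⟩ := hxy
    rw [show x = j from hx2] at hm
    rcases hm with h | h
    · exact outdeg_zero_not_mem hjT'0 h
    · exact hIj' y h
  obtain ⟨p, hpiT'⟩ := indeg_one_exists hiT'1
  obtain ⟨q, hqjT'⟩ := indeg_one_exists hjT'1
  have hpiG : (p, i) ∈ G.arcs := Finset.mem_union_left _ hpiT'
  have hqjG : (q, j) ∈ G.arcs := Finset.mem_union_left _ hqjT'
  -- fresh vertices
  have hfresh : ∀ k : ℕ, G.verts.sup id + k + 1 ∉ G.verts := by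
    intro k hk
    have := Finset.le_sup (f := id) hk
    simp only [id] at this
    omega
  set m : ℕ := G.verts.sup id with hmdef
  set α1 : ℕ := m + 1 with hα1def
  set α2 : ℕ := m + 2 with hα2def
  set β1 : ℕ := m + 3 with hβ1def
  set β2 : ℕ := m + 4 with hβ2def
  have hfα1 : α1 ∉ G.verts := by have := hfresh 0; simpa using this
  have hfα2 : α2 ∉ G.verts := by have := hfresh 1; rw [hα2def, show m + 2 = m + 1 + 1 by omega]; exact this
  have hfβ1 : β1 ∉ G.verts := by have := hfresh 2; rw [hβ1def, show m + 3 = m + 2 + 1 by omega]; exact this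
  have hfβ2 : β2 ∉ G.verts := by have := hfresh 3; rw [hβ2def, show m + 4 = m + 3 + 1 by omega]; exact this
  have g12 : α1 ≠ α2 := by omega
  have g13 : α1 ≠ β1 := by omega
  have g14 : α1 ≠ β2 := by omega
  have g23 : α2 ≠ β1 := by omega
  have g24 : α2 ≠ β2 := by omega
  have g34 : β1 ≠ β2 := by omega
  have Cg : Ctx i j α1 α2 β1 β2 p q G :=
    ⟨hGwf, hij, hfα1, hfα2, hfβ1, hfβ2, g12, g13, g14, g23, g24, g34, hpiG, hqjG,
      hGii, hGji, hGio, hGjo⟩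
  -- lift the smoothing
  obtain ⟨p₁, q₁, C₁, hA₁, hsteps⟩ := smooth_lift Cg hacyc hsmG.1
  have hsmH : Smoothed (X i j α1 α2 β1 β2 p q G) (X i j α1 α2 β1 β2 p₁ q₁ G₁) :=
    ⟨hsteps, X_no_one_one C₁ hsmG.2⟩
  have hsmN' : Smoothed (X i j c1 c2 d1 d2 u v N) (X i j c1 c2 d1 d2 u v N) :=
    ⟨Relation.ReflTransGen.refl, X_no_one_one Cn (rbpn_no_one_one hN)⟩
  have hfi : f i = i := hffix i hi
  have hfj : f j = j := hffix j hj
  have hfp : f p₁ = u := by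
    have hm1 : (f p₁, f i) ∈ N.arcs := (hfiso.2 p₁ C₁.hpv i C₁.hiv).1 C₁.hpi
    rw [hfi] at hm1
    exact indeg_one_eq hii hui hm1
  have hfq : f q₁ = v := by
    have hm1 : (f q₁, f j) ∈ N.arcs := (hfiso.2 q₁ C₁.hqv j C₁.hjv).1 C₁.hqj
    rw [hfj] at hm1
    exact indeg_one_eq hji hvj hm1
  have hisoX := iso_X C₁ Cn hfiso hfp hfq hfi hfj
  have hhomH : HomeomorphicL n (X i j α1 α2 β1 β2 p q G) (X i j c1 c2 d1 d2 u v N) := by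
    refine ⟨_, _, hsmH, hsmN', _, hisoX, ?_⟩
    intro x hx
    have hxG : x ∈ G.verts := hTsub (leafSet_subset_verts hT.1 hx)
    have h1 : x ≠ α1 := fun h => hfα1 (h ▸ hxG)
    have h2 : x ≠ α2 := fun h => hfα2 (h ▸ hxG)
    have h3 : x ≠ β1 := fun h => hfβ1 (h ▸ hxG)
    have h4 : x ≠ β2 := fun h => hfβ2 (h ▸ hxG)
    simp only [h1, h2, h3, h4, if_false]
    exact hffix x hx
  -- facts about arcs of T' at the leaves i and j
  have huniq_i' : ∀ x, (x, i) ∈ T'.arcs → x = p := fun x hx => indeg_one_eq hiT'1 hpiT' hx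
  have huniq_j' : ∀ x, (x, j) ∈ T'.arcs → x = q := fun x hx => indeg_one_eq hjT'1 hqjT' hx
  have hnoi' : ∀ y, (i, y) ∉ T'.arcs := fun y => outdeg_zero_not_mem hiT'0
  have hnoj' : ∀ y, (j, y) ∉ T'.arcs := fun y => outdeg_zero_not_mem hjT'0
  have hpi' : p ≠ i := Cg.pi'
  have hpj' : p ≠ j := Cg.pj
  have hqi' : q ≠ i := Cg.qi
  have hqj'' : q ≠ j := Cg.qj'
  have hfixσ : ∀ x : ℕ, x ∉ leafSet n → Equiv.swap i j x = x := fun x hx =>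
    Equiv.swap_apply_of_ne_of_ne (fun h => hx (h ▸ hi)) (fun h => hx (h ▸ hj))
  have hswo : ∀ z : ℕ, z ≠ i → z ≠ j → Equiv.swap i j z = z := fun z h1 h2 =>
    Equiv.swap_apply_of_ne_of_ne h1 h2
  have hleafT : leafSet n ⊆ T.verts := leafSet_subset_verts hT.1
  have hleafT' : leafSet n ⊆ T'.verts := fun x hx => hTsub (hleafT hx)
  have hTσv : (relabel (Equiv.swap i j) T).verts = T.verts := relabel_verts_eq hfixσ hleafT
  have hTσ'v : (relabel (Equiv.swap i j) T').verts = T'.verts := relabel_verts_eq hfixσ hleafT'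
  have hTσ'a : (relabel (Equiv.swap i j) T').arcs =
      (T'.arcs \ {(p, i), (q, j)}) ∪ {(p, j), (q, i)} := by
    ext ⟨x, y⟩
    rw [show ((x, y) ∈ (relabel (Equiv.swap i j) T').arcs) ↔
      ((Equiv.swap i j x, Equiv.swap i j y) ∈ T'.arcs) from by
        rw [relabel_arcs_mem, Equiv.symm_swap]]
    simp only [Finset.mem_union, Finset.mem_sdiff, Finset.mem_insert, Finset.mem_singleton,
      Prod.mk.injEq, not_or]
    constructor
    · intro h
      have hxnei : Equiv.swap i j x ≠ i := fun hc => hnoi' _ (hc ▸ h)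
      have hxnej : Equiv.swap i j x ≠ j := fun hc => hnoj' _ (hc ▸ h)
      have hxx : Equiv.swap i j x = x := by
        have h1 := Equiv.swap_apply_self i j x
        have h2 := hswo (Equiv.swap i j x) hxnei hxnej
        rw [h2] at h1
        exact h1
      by_cases hyi : Equiv.swap i j y = i
      · have hy : y = j := by
          have h1 := Equiv.swap_apply_self i j y
          rw [hyi, Equiv.swap_apply_left] at h1
          exact h1.symm
        have hxp : x = p := by
          rw [hyi] at h
          rw [← hxx]
          exact huniq_i' _ h
        exact Or.inr (Or.inl ⟨hxp, hy⟩)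
      · by_cases hyj : Equiv.swap i j y = j
        · have hy : y = i := by
            have h1 := Equiv.swap_apply_self i j y
            rw [hyj, Equiv.swap_apply_right] at h1
            exact h1.symm
          have hxq : x = q := by
            rw [hyj] at h
            rw [← hxx]
            exact huniq_j' _ h
          exact Or.inr (Or.inr ⟨hxq, hy⟩)
        · have hyy : Equiv.swap i j y = y := by
            have h1 := Equiv.swap_apply_self i j y
            have h2 := hswo (Equiv.swap i j y) hyi hyj
            rw [h2] at h1
            exact h1
          rw [hxx, hyy] at h
          refine Or.inl ⟨h, ?_, ?_⟩
          · rintro ⟨-, rfl⟩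
            exact hyj (by rw [Equiv.swap_apply_left])
          · rintro ⟨-, rfl⟩
            exact hyi (by rw [Equiv.swap_apply_right])
    · rintro (⟨hm, hn1, hn2⟩ | ⟨rfl, rfl⟩ | ⟨rfl, rfl⟩)
      · have hxi : x ≠ i := fun h => hnoi' y (h ▸ hm)
        have hxj : x ≠ j := fun h => hnoj' y (h ▸ hm)
        have hyi : y ≠ i := fun h => hn1 ⟨huniq_i' x (h ▸ hm), h⟩
        have hyj : y ≠ j := fun h => hn2 ⟨huniq_j' x (h ▸ hm), h⟩
        rw [hswo x hxi hxj, hswo y hyi hyj]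
        exact hm
      · rw [hswo x hpi' hpj', Equiv.swap_apply_right]
        exact hpiT'
      · rw [hswo x hqi' hqj'', Equiv.swap_apply_left]
        exact hqjT'
  have hTw : relabel (Equiv.swap i j) T' =
      (⟨T'.verts, (T'.arcs \ {(p, i), (q, j)}) ∪ {(p, j), (q, i)}⟩ : Dgraph) := by
    have he : relabel (Equiv.swap i j) T' =
        ⟨(relabel (Equiv.swap i j) T').verts, (relabel (Equiv.swap i j) T').arcs⟩ := rfl
    rw [he, hTσ'v, hTσ'a]
  -- the subdivision chain
  set D : Finset (ℕ × ℕ) := {(p, i), (q, j)} with hDdef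
  set A0 : Finset (ℕ × ℕ) := (T'.arcs \ D) ∪ {(p, j), (q, i)} with hA0def
  set A1 : Finset (ℕ × ℕ) := insert (p, β2) (insert (β2, j) (A0.erase (p, j))) with hA1def
  set A2 : Finset (ℕ × ℕ) := insert (p, α1) (insert (α1, β2) (A1.erase (p, β2))) with hA2def
  set A3 : Finset (ℕ × ℕ) := insert (q, α2) (insert (α2, i) (A2.erase (q, i))) with hA3def
  set A4 : Finset (ℕ × ℕ) := insert (q, β1) (insert (β1, α2) (A3.erase (q, α2))) with hA4def
  set V4 : Finset ℕ := insert β1 (insert α2 (insert α1 (insert β2 T'.verts))) with hV4def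
  have hm1 : (p, j) ∈ A0 := Finset.mem_union_right _ (Finset.mem_insert_self _ _)
  have hm3 : (q, i) ∈ A2 := by
    refine Finset.mem_insert_of_mem (Finset.mem_insert_of_mem ?_)
    refine Finset.mem_erase.2 ⟨?_, ?_⟩
    · intro hc
      rw [Prod.mk.injEq] at hc
      exact Cg.ib2 hc.2
    · refine Finset.mem_insert_of_mem (Finset.mem_insert_of_mem ?_)
      refine Finset.mem_erase.2 ⟨?_, Finset.mem_union_right _ ?_⟩
      · intro hc
        rw [Prod.mk.injEq] at hc
        exact hij hc.2
      · exact Finset.mem_insert_of_mem (Finset.mem_singleton_self _)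
  have hsubS : Subdivision (relabel (Equiv.swap i j) T) (⟨V4, A4⟩ : Dgraph) := by
    have s0 : Subdivision (relabel (Equiv.swap i j) T) (relabel (Equiv.swap i j) T') :=
      subdivision_relabel _ hsubT
    rw [hTw] at s0
    have s1 := s0.tail (⟨p, j, β2, hm1, hfβ2, rfl⟩ :
      SubdivStep ⟨T'.verts, A0⟩ ⟨insert β2 T'.verts, A1⟩)
    have hfa1' : α1 ∉ insert β2 T'.verts := by
      simp only [Finset.mem_insert, not_or]
      exact ⟨g14, hfα1⟩
    have s2 := s1.tail (⟨p, β2, α1, Finset.mem_insert_self _ _, hfa1', rfl⟩ :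
      SubdivStep ⟨insert β2 T'.verts, A1⟩ ⟨insert α1 (insert β2 T'.verts), A2⟩)
    have hfa2' : α2 ∉ insert α1 (insert β2 T'.verts) := by
      simp only [Finset.mem_insert, not_or]
      exact ⟨Ne.symm g12, g24, hfα2⟩
    have s3 := s2.tail (⟨q, i, α2, hm3, hfa2', rfl⟩ :
      SubdivStep ⟨insert α1 (insert β2 T'.verts), A2⟩
        ⟨insert α2 (insert α1 (insert β2 T'.verts)), A3⟩)
    have hfb1' : β1 ∉ insert α2 (insert α1 (insert β2 T'.verts)) := by
      simp only [Finset.mem_insert, not_or]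
      exact ⟨Ne.symm g23, Ne.symm g13, g34, hfβ1⟩
    exact s3.tail (⟨q, α2, β1, Finset.mem_insert_self _ _, hfb1', rfl⟩ :
      SubdivStep ⟨insert α2 (insert α1 (insert β2 T'.verts)), A3⟩ ⟨V4, A4⟩)
  -- reduce A4 to a normal form
  have hA0' : A0 = insert (p, j) (insert (q, i) (T'.arcs \ D)) := by
    rw [hA0def, Finset.union_comm, Finset.insert_union, ← Finset.insert_eq]
  have hqi_not : (q, i) ∉ T'.arcs \ D := by
    intro hc
    obtain ⟨hm', hn'⟩ := Finset.mem_sdiff.1 hc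
    have hqp : q = p := huniq_i' q hm'
    exact hn' (by rw [hqp]; exact Finset.mem_insert_self _ _)
  have hpj_not : (p, j) ∉ insert (q, i) (T'.arcs \ D) := by
    intro hc
    rcases Finset.mem_insert.1 hc with hc' | hc'
    · rw [Prod.mk.injEq] at hc'
      exact hij hc'.2.symm
    · obtain ⟨hm', hn'⟩ := Finset.mem_sdiff.1 hc'
      have hpq2 : p = q := huniq_j' p hm'
      exact hn' (by rw [hpq2]; exact Finset.mem_insert_of_mem (Finset.mem_singleton_self _))
  have hnoT'α1 : ∀ z : ℕ, (z, α1) ∉ T'.arcs \ D :=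
    fun z hc => hfα1 ((hT'wf _ (Finset.mem_sdiff.1 hc).1).2)
  have hnoT'α2 : ∀ z : ℕ, (z, α2) ∉ T'.arcs \ D :=
    fun z hc => hfα2 ((hT'wf _ (Finset.mem_sdiff.1 hc).1).2)
  have hnoT'β1 : ∀ z : ℕ, (z, β1) ∉ T'.arcs \ D :=
    fun z hc => hfβ1 ((hT'wf _ (Finset.mem_sdiff.1 hc).1).2)
  have hnoT'β2 : ∀ z : ℕ, (z, β2) ∉ T'.arcs \ D :=
    fun z hc => hfβ2 ((hT'wf _ (Finset.mem_sdiff.1 hc).1).2)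
  have hred2 : A1.erase (p, β2) = insert (β2, j) (insert (q, i) (T'.arcs \ D)) := by
    rw [hA1def, hA0', Finset.erase_insert hpj_not]
    refine Finset.erase_insert ?_
    intro hc
    rcases Finset.mem_insert.1 hc with hc' | hc'
    · rw [Prod.mk.injEq] at hc'
      exact Cg.pb2 hc'.1
    · rcases Finset.mem_insert.1 hc' with hc'' | hc''
      · rw [Prod.mk.injEq] at hc''
        exact Cg.ib2 hc''.2.symm
      · exact hnoT'β2 p hc''
  have hred3 : A2.erase (q, i) =
      insert (p, α1) (insert (α1, β2) (insert (β2, j) (T'.arcs \ D))) := by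
    rw [hA2def, hred2]
    rw [Finset.erase_insert_of_ne (by
      intro hc
      rw [Prod.mk.injEq] at hc
      exact Cg.ia1 hc.2.symm)]
    rw [Finset.erase_insert_of_ne (by
      intro hc
      rw [Prod.mk.injEq] at hc
      exact Cg.ib2 hc.2.symm)]
    rw [Finset.erase_insert_of_ne (by
      intro hc
      rw [Prod.mk.injEq] at hc
      exact hij hc.2.symm)]
    rw [Finset.erase_insert hqi_not]
  have hred4 : A3.erase (q, α2) = insert (α2, i) (insert (p, α1) (insert (α1, β2)
      (insert (β2, j) (T'.arcs \ D)))) := by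
    rw [hA3def, hred3]
    refine Finset.erase_insert ?_
    intro hc
    rcases Finset.mem_insert.1 hc with hc' | hc'
    · rw [Prod.mk.injEq] at hc'
      exact Cg.ia2 hc'.2.symm
    · rcases Finset.mem_insert.1 hc' with hc2 | hc2
      · rw [Prod.mk.injEq] at hc2
        exact Cg.d12 hc2.2.symm
      · rcases Finset.mem_insert.1 hc2 with hc3 | hc3
        · rw [Prod.mk.injEq] at hc3
          exact Cg.d24 hc3.2
        · rcases Finset.mem_insert.1 hc3 with hc4 | hc4
          · rw [Prod.mk.injEq] at hc4
            exact Cg.qb2 hc4.1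
          · exact hnoT'α2 q hc4
  have hA4' : A4 = insert (q, β1) (insert (β1, α2) (insert (α2, i) (insert (p, α1)
      (insert (α1, β2) (insert (β2, j) (T'.arcs \ D)))))) := by
    rw [hA4def, hred4]
  -- the linking arcs
  set J : Finset (ℕ × ℕ) := I ∪ {(α1, α2), (β1, β2)} with hJdef
  have hV4G : V4 = G.verts ∪ {α1, α2, β1, β2} := by
    rw [hGv]
    ext z
    simp only [hV4def, Finset.mem_insert, Finset.mem_union, Finset.mem_singleton]
    tauto
  have hIpi : (p, i) ∉ I := hIi p
  have hIqj : (q, j) ∉ I := hIj q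
  have hcombarcs : A4 ∪ J = (G.arcs \ D) ∪
      {(p, α1), (α1, α2), (α2, i), (q, β1), (β1, β2), (β2, j), (α1, β2), (β1, α2)} := by
    rw [hA4', hJdef, hGa]
    ext ⟨x, y⟩
    simp only [Finset.mem_union, Finset.mem_insert, Finset.mem_singleton, Finset.mem_sdiff,
      Prod.mk.injEq]
    constructor
    · rintro ((⟨rfl, rfl⟩ | ⟨rfl, rfl⟩ | ⟨rfl, rfl⟩ | ⟨rfl, rfl⟩ | ⟨rfl, rfl⟩ | ⟨rfl, rfl⟩ | hsd) |
        (hI' | ⟨rfl, rfl⟩ | ⟨rfl, rfl⟩))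
      · exact Or.inr (Or.inr (Or.inr (Or.inr (Or.inl ⟨rfl, rfl⟩))))
      · exact Or.inr (Or.inr (Or.inr (Or.inr (Or.inr (Or.inr (Or.inr (Or.inr ⟨rfl, rfl⟩)))))))
      · exact Or.inr (Or.inr (Or.inr (Or.inl ⟨rfl, rfl⟩)))
      · exact Or.inr (Or.inl ⟨rfl, rfl⟩)
      · exact Or.inr (Or.inr (Or.inr (Or.inr (Or.inr (Or.inr (Or.inr (Or.inl ⟨rfl, rfl⟩)))))))
      · exact Or.inr (Or.inr (Or.inr (Or.inr (Or.inr (Or.inr (Or.inl ⟨rfl, rfl⟩))))))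
      · exact Or.inl ⟨Or.inl hsd.1, hsd.2⟩
      · refine Or.inl ⟨Or.inr hI', ?_⟩
        rw [hDdef]
        simp only [Finset.mem_insert, Finset.mem_singleton]
        rintro (hc | hc)
        · rw [hc] at hI'
          exact hIpi hI'
        · rw [hc] at hI'
          exact hIqj hI'
      · exact Or.inr (Or.inr (Or.inl ⟨rfl, rfl⟩))
      · exact Or.inr (Or.inr (Or.inr (Or.inr (Or.inr (Or.inl ⟨rfl, rfl⟩)))))
    · rintro (⟨hmem, hnD⟩ | ⟨rfl, rfl⟩ | ⟨rfl, rfl⟩ | ⟨rfl, rfl⟩ | ⟨rfl, rfl⟩ | ⟨rfl, rfl⟩ |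
        ⟨rfl, rfl⟩ | ⟨rfl, rfl⟩ | ⟨rfl, rfl⟩)
      · rcases hmem with hm' | hI'
        · exact Or.inl (Or.inr (Or.inr (Or.inr (Or.inr (Or.inr (Or.inr ⟨hm', hnD⟩))))))
        · exact Or.inr (Or.inl hI')
      · exact Or.inl (Or.inr (Or.inr (Or.inr (Or.inl ⟨rfl, rfl⟩))))
      · exact Or.inr (Or.inr (Or.inl ⟨rfl, rfl⟩))
      · exact Or.inl (Or.inr (Or.inr (Or.inl ⟨rfl, rfl⟩)))
      · exact Or.inl (Or.inl ⟨rfl, rfl⟩)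
      · exact Or.inr (Or.inr (Or.inr ⟨rfl, rfl⟩))
      · exact Or.inl (Or.inr (Or.inr (Or.inr (Or.inr (Or.inr (Or.inl ⟨rfl, rfl⟩))))))
      · exact Or.inl (Or.inr (Or.inr (Or.inr (Or.inr (Or.inl ⟨rfl, rfl⟩)))))
      · exact Or.inl (Or.inr (Or.inl ⟨rfl, rfl⟩))
  have hcomb : (⟨V4, A4 ∪ J⟩ : Dgraph) = X i j α1 α2 β1 β2 p q G := by
    simp only [X, Dgraph.mk.injEq]
    exact ⟨hV4G, hcombarcs⟩
  refine ⟨⟨V4, A4⟩, hsubS, J, ?_, ?_, ?_, ?_⟩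
  · -- endpoints of linking arcs
    intro a ha
    rw [hTσv]
    have hT'V4 : T'.verts ⊆ V4 := by
      intro z hz
      rw [hV4def]
      exact Finset.mem_insert_of_mem (Finset.mem_insert_of_mem
        (Finset.mem_insert_of_mem (Finset.mem_insert_of_mem hz)))
    rcases Finset.mem_union.1 ha with hIa | hnew
    · obtain ⟨h1, h2, h3, h4⟩ := hI a hIa
      exact ⟨hT'V4 h1, h2, hT'V4 h3, h4⟩
    · have hmα1 : α1 ∈ V4 := by rw [hV4def]; simp
      have hmα2 : α2 ∈ V4 := by rw [hV4def]; simp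
      have hmβ1 : β1 ∈ V4 := by rw [hV4def]; simp
      have hmβ2 : β2 ∈ V4 := by rw [hV4def]; simp
      have hnα1 : α1 ∉ T.verts := fun h => hfα1 (hTsub h)
      have hnα2 : α2 ∉ T.verts := fun h => hfα2 (hTsub h)
      have hnβ1 : β1 ∉ T.verts := fun h => hfβ1 (hTsub h)
      have hnβ2 : β2 ∉ T.verts := fun h => hfβ2 (hTsub h)
      rcases Finset.mem_insert.1 hnew with rfl | h2
      · exact ⟨hmα1, hnα1, hmα2, hnα2⟩
      · rw [Finset.mem_singleton] at h2
        subst h2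
        exact ⟨hmβ1, hnβ1, hmβ2, hnβ2⟩
  · -- disjointness of linking arcs
    intro a ha b hb hab
    have hIside : ∀ c ∈ I, c.1 ∈ T'.verts ∧ c.2 ∈ T'.verts :=
      fun c hc => ⟨(hI c hc).1, (hI c hc).2.2.1⟩
    rcases Finset.mem_union.1 ha with haI | hanew
    · rcases Finset.mem_union.1 hb with hbI | hbnew
      · exact hdisj a haI b hbI hab
      · obtain ⟨ha1, ha2⟩ := hIside a haI
        rcases Finset.mem_insert.1 hbnew with rfl | hb2
        · show a.1 ≠ α1 ∧ a.1 ≠ α2 ∧ a.2 ≠ α1 ∧ a.2 ≠ α2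
          exact ⟨fun h => hfα1 (h ▸ ha1), fun h => hfα2 (h ▸ ha1),
            fun h => hfα1 (h ▸ ha2), fun h => hfα2 (h ▸ ha2)⟩
        · rw [Finset.mem_singleton] at hb2
          subst hb2
          show a.1 ≠ β1 ∧ a.1 ≠ β2 ∧ a.2 ≠ β1 ∧ a.2 ≠ β2
          exact ⟨fun h => hfβ1 (h ▸ ha1), fun h => hfβ2 (h ▸ ha1),
            fun h => hfβ1 (h ▸ ha2), fun h => hfβ2 (h ▸ ha2)⟩
    · rcases Finset.mem_union.1 hb with hbI | hbnew
      · obtain ⟨hb1, hb2⟩ := hIside b hbI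
        rcases Finset.mem_insert.1 hanew with rfl | ha2
        · show α1 ≠ b.1 ∧ α1 ≠ b.2 ∧ α2 ≠ b.1 ∧ α2 ≠ b.2
          exact ⟨fun h => hfα1 (h.symm ▸ hb1), fun h => hfα1 (h.symm ▸ hb2),
            fun h => hfα2 (h.symm ▸ hb1), fun h => hfα2 (h.symm ▸ hb2)⟩
        · rw [Finset.mem_singleton] at ha2
          subst ha2
          show β1 ≠ b.1 ∧ β1 ≠ b.2 ∧ β2 ≠ b.1 ∧ β2 ≠ b.2
          exact ⟨fun h => hfβ1 (h.symm ▸ hb1), fun h => hfβ1 (h.symm ▸ hb2),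
            fun h => hfβ2 (h.symm ▸ hb1), fun h => hfβ2 (h.symm ▸ hb2)⟩
      · rcases Finset.mem_insert.1 hanew with rfl | ha2
        · rcases Finset.mem_insert.1 hbnew with rfl | hb2
          · exact absurd rfl hab
          · rw [Finset.mem_singleton] at hb2
            subst hb2
            exact ⟨g13, g14, g23, g24⟩
        · rw [Finset.mem_singleton] at ha2
          subst ha2
          rcases Finset.mem_insert.1 hbnew with rfl | hb2
          · exact ⟨Ne.symm g13, Ne.symm g23, Ne.symm g14, Ne.symm g24⟩
          · rw [Finset.mem_singleton] at hb2
            subst hb2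
            exact absurd rfl hab
  · -- acyclicity of the combined graph
    show Dgraph.Acyclic ⟨V4, A4 ∪ J⟩
    rw [hcomb]
    exact X_acyclic Cg hacyc
  · -- homeomorphism
    show HomeomorphicL n ⟨V4, A4 ∪ J⟩ _
    rw [hcomb]
    exact hhomH

end AuxCross

namespace AuxCross

set_option linter.unusedSectionVars false
set_option maxHeartbeats 1600000

lemma adj_step {n : ℕ} (i : ℕ) (hi : i ∈ leafSet n) (hi1 : i + 1 ∈ leafSet n)
    {N : Dgraph} (hN : TreeBased n N) :
    ∃ N', AdjCrossStep n N N' ∧ TreeBased n N' ∧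
      ∀ T, RBPT n T → IsBaseTree n N T →
        IsBaseTree n N' (relabel (Equiv.swap i (i + 1)) T) := by
  obtain ⟨hNr, T₀, hT₀, hB₀⟩ := hN
  have hii : i ≠ i + 1 := by omega
  obtain ⟨hivm, hii1, hio⟩ := rbpn_leaf hNr hi
  obtain ⟨hjvm, hji1, hjo⟩ := rbpn_leaf hNr hi1
  obtain ⟨u, hu⟩ := indeg_one_exists hii1
  obtain ⟨v, hv⟩ := indeg_one_exists hji1
  have hfr : ∀ k : ℕ, N.verts.sup id + k + 1 ∉ N.verts := by
    intro k hk
    have := Finset.le_sup (f := id) hk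
    simp only [id] at this
    omega
  set m : ℕ := N.verts.sup id with hmdef
  have hf1 : m + 1 ∉ N.verts := by have := hfr 0; simpa using this
  have hf2 : m + 2 ∉ N.verts := by
    have := hfr 1; rw [show m + 2 = m + 1 + 1 by omega]; exact this
  have hf3 : m + 3 ∉ N.verts := by
    have := hfr 2; rw [show m + 3 = m + 2 + 1 by omega]; exact this
  have hf4 : m + 4 ∉ N.verts := by
    have := hfr 3; rw [show m + 4 = m + 3 + 1 by omega]; exact this
  have hnd : [m + 1, m + 2, m + 3, m + 4].Nodup := by
    simp only [List.nodup_cons, List.mem_cons, List.mem_singleton, List.not_mem_nil,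
      or_false, not_or, List.nodup_nil, and_true]
    exact ⟨⟨by omega, by omega, by omega⟩, ⟨by omega, by omega⟩, by omega, not_false⟩
  have hcr : CrossoverAt N i (i + 1)
      (X i (i + 1) (m + 1) (m + 2) (m + 3) (m + 4) u v N) :=
    ⟨u, v, m + 1, m + 2, m + 3, m + 4, hu, hv, hf1, hf2, hf3, hf4, hnd, rfl⟩
  obtain ⟨hrb, hstep⟩ := crossover_step hNr hii hi hi1 hcr
  have hfix : ∀ x : ℕ, x ∉ leafSet n → Equiv.swap i (i + 1) x = x := fun x hx =>
    Equiv.swap_apply_of_ne_of_ne (fun h => hx (h ▸ hi)) (fun h => hx (h ▸ hi1))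
  exact ⟨_, ⟨i, hi, hi1, hcr⟩,
    ⟨hrb, relabel (Equiv.swap i (i + 1)) T₀, relabel_rbpt hfix hT₀, hstep T₀ hT₀ hB₀⟩, hstep⟩

lemma prod_fix {n : ℕ} : ∀ (l : List ℕ), (∀ t ∈ l, 1 ≤ t ∧ t + 1 ≤ n) →
    ∀ x, x ∉ leafSet n → ((l.map (fun t => Equiv.swap t (t + 1))).prod) x = x := by
  intro l
  induction l with
  | nil => intro _ x _; simp
  | cons a l ih =>
    intro hb x hx
    rw [List.map_cons, List.prod_cons, Equiv.Perm.mul_apply,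
      ih (fun t ht => hb t (List.mem_cons_of_mem _ ht)) x hx]
    obtain ⟨h1, h2⟩ := hb a List.mem_cons_self
    have hxa : x ≠ a := fun h => hx (by rw [h]; exact Finset.mem_Icc.2 ⟨h1, by omega⟩)
    have hxa1 : x ≠ a + 1 := fun h => hx (by rw [h]; exact Finset.mem_Icc.2 ⟨by omega, h2⟩)
    exact Equiv.swap_apply_of_ne_of_ne hxa hxa1

lemma chain {n : ℕ} : ∀ (l : List ℕ), (∀ k ∈ l, 1 ≤ k ∧ k + 1 ≤ n) →
    ∀ N : Dgraph, TreeBased n N →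
    ∃ N', Relation.ReflTransGen (AdjCrossStep n) N N' ∧ TreeBased n N' ∧
      ∀ T, RBPT n T → IsBaseTree n N T →
        IsBaseTree n N' (relabel ((l.map (fun k => Equiv.swap k (k + 1))).prod) T) := by
  intro l
  induction l with
  | nil =>
    intro _ N hN
    refine ⟨N, Relation.ReflTransGen.refl, hN, ?_⟩
    intro T hT hB
    have he : relabel (⇑((List.map (fun k => Equiv.swap k (k + 1)) ([] : List ℕ)).prod)) T
        = T := by
      rw [show ((List.map (fun k => Equiv.swap k (k + 1)) ([] : List ℕ)).prod)
        = (1 : Equiv.Perm ℕ) from by simp]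
      rw [show ⇑(1 : Equiv.Perm ℕ) = fun x : ℕ => x from rfl]
      exact relabel_one T
    rw [he]
    exact hB
  | cons a l ih =>
    intro hmem N hN
    obtain ⟨N₁, hr₁, hN₁, hbase₁⟩ := ih (fun k hk => hmem k (List.mem_cons_of_mem _ hk)) N hN
    obtain ⟨ha1, ha2⟩ := hmem a List.mem_cons_self
    have hamem : a ∈ leafSet n := Finset.mem_Icc.2 ⟨ha1, by omega⟩
    have ha1mem : a + 1 ∈ leafSet n := Finset.mem_Icc.2 ⟨by omega, ha2⟩
    obtain ⟨N₂, hstep, hN₂, hbase₂⟩ := adj_step a hamem ha1mem hN₁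
    refine ⟨N₂, hr₁.tail hstep, hN₂, ?_⟩
    intro T hT hB
    have h1 := hbase₁ T hT hB
    have hfixl := prod_fix l (fun t ht => hmem t (List.mem_cons_of_mem _ ht))
    have h2 := hbase₂ (relabel ((l.map (fun k => Equiv.swap k (k + 1))).prod) T)
      (relabel_rbpt hfixl hT) h1
    rw [relabel_comp] at h2
    rw [List.map_cons, List.prod_cons, Equiv.Perm.coe_mul]
    exact h2

lemma cycle_prod : ∀ (m k : ℕ),
    ((List.range' k m).map (fun t => Equiv.swap t (t + 1))).prod (k + m) = k := by
  intro m
  induction m with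
  | zero => intro k; simp
  | succ m ih =>
    intro k
    rw [List.range'_succ, List.map_cons, List.prod_cons, Equiv.Perm.mul_apply,
      show k + (m + 1) = (k + 1) + m by omega, ih (k + 1), Equiv.swap_apply_right]

lemma inv_prod_swaps : ∀ l : List ℕ,
    (((l.map (fun t => Equiv.swap t (t + 1))).prod)⁻¹ : Equiv.Perm ℕ) =
      ((l.reverse.map (fun t => Equiv.swap t (t + 1))).prod) := by
  intro l
  induction l with
  | nil => simp
  | cons a l ih =>
    rw [List.map_cons, List.prod_cons, mul_inv_rev, ih, List.reverse_cons, List.map_append,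
      List.prod_append]
    simp [Equiv.swap_inv]

lemma perm_decomp : ∀ (n : ℕ) (π : Equiv.Perm ℕ), (∀ x ∉ leafSet n, π x = x) →
    ∃ l : List ℕ, (∀ k ∈ l, 1 ≤ k ∧ k + 1 ≤ n) ∧
      π = (l.map (fun k => Equiv.swap k (k + 1))).prod := by
  intro n
  induction n with
  | zero =>
    intro π hπ
    refine ⟨[], by simp, ?_⟩
    have hone : π = 1 := by
      apply Equiv.ext
      intro x
      have : x ∉ leafSet 0 := by
        intro h
        have := Finset.mem_Icc.1 h
        omega
      simpa using hπ x this
    simp [hone]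
  | succ n ih =>
    intro π hπ
    set k : ℕ := π.symm (n + 1) with hkdef
    have hπk : π k = n + 1 := by rw [hkdef]; exact π.apply_symm_apply _
    have hkmem : 1 ≤ k ∧ k ≤ n + 1 := by
      by_contra hc
      have hknot : k ∉ leafSet (n + 1) := by
        intro h
        exact hc (Finset.mem_Icc.1 h)
      have := hπ k hknot
      rw [hπk] at this
      have : k ∈ leafSet (n + 1) := Finset.mem_Icc.2 ⟨by omega, by omega⟩
      exact hknot this
    set c : Equiv.Perm ℕ := ((List.range' k (n + 1 - k)).map
      (fun t => Equiv.swap t (t + 1))).prod with hcdef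
    have hrange : ∀ t ∈ List.range' k (n + 1 - k), 1 ≤ t ∧ t + 1 ≤ n + 1 := by
      intro t ht
      rw [List.mem_range'_1] at ht
      omega
    have hc : c (n + 1) = k := by
      have := cycle_prod (n + 1 - k) k
      rw [show k + (n + 1 - k) = n + 1 by omega] at this
      rw [hcdef]
      exact this
    set π' : Equiv.Perm ℕ := π * c with hπ'def
    have hπ'top : π' (n + 1) = n + 1 := by
      rw [hπ'def, Equiv.Perm.mul_apply, hc, hπk]
    have hπ'fix : ∀ x ∉ leafSet n, π' x = x := by
      intro x hx
      by_cases hxe : x = n + 1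
      · rw [hxe]; exact hπ'top
      · have hx' : x ∉ leafSet (n + 1) := by
          intro h
          have h2 := Finset.mem_Icc.1 h
          have h3 : x ∈ leafSet n := Finset.mem_Icc.2 ⟨h2.1, by omega⟩
          exact hx h3
        rw [hπ'def, Equiv.Perm.mul_apply]
        rw [show c x = x from prod_fix _ hrange x hx']
        exact hπ x hx'
    obtain ⟨l', hl', hdec⟩ := ih π' hπ'fix
    refine ⟨l' ++ (List.range' k (n + 1 - k)).reverse, ?_, ?_⟩
    · intro t ht
      rcases List.mem_append.1 ht with h | h
      · have := hl' t h
        omega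
      · exact hrange t (List.mem_reverse.1 h)
    · have hcinv : c⁻¹ = (((List.range' k (n + 1 - k)).reverse).map
        (fun t => Equiv.swap t (t + 1))).prod := by
        rw [hcdef]
        exact inv_prod_swaps _
      rw [List.map_append, List.prod_append, ← hdec, ← hcinv, hπ'def,
        mul_inv_cancel_right]

end AuxCross

/-- For any tree-based network N on X = {1, …, n} and any permutation π of X, successively
adding finitely many crossovers between terminal arcs of adjacent leaves yields a tree-based
network N' such that, for every base tree T of N, the tree obtained from T by relabelling
each leaf x as π(x) is a base tree of N'. -/
theorem adjacent_crossovers_realise_permutation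
    (n : ℕ) (hn : 1 < n) (N : Dgraph) (hN : TreeBased n N)
    (π : Equiv.Perm ℕ) (hπ : ∀ x : ℕ, x ∉ leafSet n → π x = x) :
    ∃ N' : Dgraph, Relation.ReflTransGen (AdjCrossStep n) N N' ∧
      TreeBased n N' ∧
      ∀ T : Dgraph, RBPT n T → IsBaseTree n N T → IsBaseTree n N' (relabel π T) := by
  obtain ⟨l, hl, hdec⟩ := AuxCross.perm_decomp n π hπ
  obtain ⟨N', hr, hN', hbase⟩ := AuxCross.chain l hl N hN
  refine ⟨N', hr, hN', ?_⟩
  intro T hT hB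
  rw [hdec]
  exact hbase T hT hB
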